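/- arXiv:1502.02987 — 4 statements merged into one kernel-verified Lean document; each statement's English description precedes it below -/
import Mathlib

section
/- Let X and Y be nonempty finite sets and let Γ : X × Y → {0,1} be a bipartite graph such that every x ∈ X has at least one y ∈ Y with Γ(x,y) = 1. Then the infimum of the Shannon capacities C(N), taken over all channels N on X × Y that are supported on Γ, equals log α*(Γ) (natural logarithm), and this infimum is attained by some channel N supported on Γ. -/
open Classical in
/-- Mutual information I(p;N) with natural logarithm. -/
noncomputable def mutInfo {X Y : Type*} [Fintype X] [Fintype Y]
    (p : X → ℝ) (N : X → Y → ℝ) : ℝ :=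
  ∑ x, ∑ y, if 0 < p x * N x y then
    p x * N x y * Real.log (N x y / ∑ x', p x' * N x' y) else 0

/-- p is a probability distribution on X. -/
def IsDist {X : Type*} [Fintype X] (p : X → ℝ) : Prop :=
  (∀ x, 0 ≤ p x) ∧ ∑ x, p x = 1

/-- N is a channel from X to Y. -/
def IsChannel {X Y : Type*} [Fintype X] [Fintype Y] (N : X → Y → ℝ) : Prop :=
  (∀ x y, 0 ≤ N x y) ∧ ∀ x, ∑ y, N x y = 1

/-- N is supported on the bipartite graph Γ. -/
def SupportedOn {X Y : Type*} (Γ : X → Y → ℝ) (N : X → Y → ℝ) : Prop :=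
  ∀ x y, 0 < N x y → Γ x y = 1

/-- Shannon capacity of a channel. -/
noncomputable def capacity {X Y : Type*} [Fintype X] [Fintype Y]
    (N : X → Y → ℝ) : ℝ :=
  sSup { c | ∃ p, IsDist p ∧ c = mutInfo p N }

/-- Fractional packing number of a bipartite graph Γ. -/
noncomputable def fracPack {X Y : Type*} [Fintype X] [Fintype Y]
    (Γ : X → Y → ℝ) : ℝ :=
  sSup { s | ∃ w : X → ℝ, (∀ x, 0 ≤ w x) ∧ (∀ y, ∑ x, w x * Γ x y ≤ 1) ∧
    s = ∑ x, w x }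


open Finset Real

section Helpers
variable {Y : Type*} [Fintype Y]


lemma sum_if_pos_eq (a : Y → ℝ) (ha : ∀ y, 0 ≤ a y) :
    ∑ y, (if 0 < a y then a y else 0) = ∑ y, a y := by
  refine Finset.sum_congr rfl fun y _ => ?_
  by_cases h : 0 < a y
  · simp [h]
  · simp [h, le_antisymm (not_lt.1 h) (ha y)]

lemma G1 (a b : Y → ℝ) (ha0 : ∀ y, 0 ≤ a y) (ha1 : ∑ y, a y = 1)
    (hab : ∀ y, 0 < a y → 0 < b y)
    (hb1 : ∑ y, (if 0 < a y then b y else 0) ≤ 1) :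
    0 ≤ ∑ y, (if 0 < a y then a y * Real.log (a y / b y) else 0) := by
  have key : ∀ y, (if 0 < a y then a y - b y else 0) ≤
      (if 0 < a y then a y * Real.log (a y / b y) else 0) := by
    intro y
    by_cases h : 0 < a y
    · simp only [h, if_true]
      have hb := hab y h
      have h1 : Real.log (b y / a y) ≤ b y / a y - 1 :=
        Real.log_le_sub_one_of_pos (div_pos hb h)
      have h2 : Real.log (a y / b y) = - Real.log (b y / a y) := by
        rw [← Real.log_inv]; congr 1; field_simp
      have h3 := mul_le_mul_of_nonneg_left h1 (le_of_lt h)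
      have h4 : a y * (b y / a y - 1) = b y - a y := by field_simp
      rw [h2]; nlinarith
    · simp [h]
  calc (0:ℝ) = 1 - 1 := by ring
    _ ≤ (∑ y, (if 0 < a y then a y else 0)) - ∑ y, (if 0 < a y then b y else 0) := by
        rw [sum_if_pos_eq a ha0, ha1]; linarith
    _ = ∑ y, (if 0 < a y then a y - b y else 0) := by
        rw [← Finset.sum_sub_distrib]
        exact Finset.sum_congr rfl fun y _ => by by_cases h : 0 < a y <;> simp [h]
    _ ≤ _ := Finset.sum_le_sum fun y _ => key y

lemma G2 (a b : Y → ℝ) (ha0 : ∀ y, 0 ≤ a y) (ha1 : ∑ y, a y = 1)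
    (hab : ∀ y, 0 < a y → 0 < b y) :
    - Real.log (∑ y, (if 0 < a y then b y else 0)) ≤
      ∑ y, (if 0 < a y then a y * Real.log (a y / b y) else 0) := by
  set B := ∑ y, (if 0 < a y then b y else 0) with hB
  have hay : ∃ y, 0 < a y := by
    by_contra h
    push_neg at h
    have : ∑ y, a y = 0 := Finset.sum_eq_zero fun y _ => le_antisymm (h y) (ha0 y)
    rw [ha1] at this; norm_num at this
  obtain ⟨y₀, hy₀⟩ := hay
  have hBpos : 0 < B := by
    refine Finset.sum_pos' (fun y _ => ?_) ⟨y₀, Finset.mem_univ y₀, ?_⟩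
    · by_cases h : 0 < a y
      · simp only [h, if_true]; exact (hab y h).le
      · simp [h]
    · simp [hy₀, hab y₀ hy₀]
  have h1 : 0 ≤ ∑ y, (if 0 < a y then a y * Real.log (a y / (b y / B)) else 0) := by
    refine G1 a (fun y => b y / B) ha0 ha1 (fun y hy => div_pos (hab y hy) hBpos) ?_
    have e1 : ∀ y, (if 0 < a y then b y / B else 0) = (if 0 < a y then b y else 0) / B := by
      intro y; by_cases h : 0 < a y <;> simp [h]
    rw [Finset.sum_congr rfl (fun y _ => e1 y), ← Finset.sum_div, ← hB, div_self hBpos.ne']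
  have h2 : ∀ y, (if 0 < a y then a y * Real.log (a y / (b y / B)) else 0)
      = (if 0 < a y then a y * Real.log (a y / b y) else 0)
        + (if 0 < a y then a y else 0) * Real.log B := by
    intro y
    by_cases h : 0 < a y
    · simp only [h, if_true]
      have hb := hab y h
      have e : a y / (b y / B) = (a y / b y) * B := by field_simp
      rw [e, Real.log_mul (div_pos h hb).ne' hBpos.ne']
      ring
    · simp [h]
  rw [Finset.sum_congr rfl (fun y _ => h2 y), Finset.sum_add_distrib,
    ← Finset.sum_mul, sum_if_pos_eq a ha0, ha1, one_mul] at h1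
  linarith

end Helpers

section Main
variable {X Y : Type*} [Fintype X] [Fintype Y]


/-- decomposition: for any reference output distribution r positive on the support,
the "r-version" of mutual information equals mutInfo plus a relative-entropy term. -/
lemma mutInfo_decomp (p : X → ℝ) (N : X → Y → ℝ) (r : Y → ℝ)
    (hp : ∀ x, 0 ≤ p x) (hN : ∀ x y, 0 ≤ N x y)
    (hr : ∀ x y, 0 < p x * N x y → 0 < r y) :
    ∑ x, ∑ y, (if 0 < p x * N x y then p x * N x y * Real.log (N x y / r y) else 0)
      = mutInfo p N
        + ∑ y, (if 0 < (∑ x, p x * N x y) then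
            (∑ x, p x * N x y) * Real.log ((∑ x, p x * N x y) / r y) else 0) := by
  set q : Y → ℝ := fun y => ∑ x, p x * N x y with hq
  have hq0 : ∀ y, 0 ≤ q y := fun y =>
    Finset.sum_nonneg fun x _ => mul_nonneg (hp x) (hN x y)
  have hpqle : ∀ x y, p x * N x y ≤ q y := fun x y =>
    Finset.single_le_sum (fun x' _ => mul_nonneg (hp x') (hN x' y)) (Finset.mem_univ x)
  -- step 1: termwise split of log
  have step1 : ∀ x y, (if 0 < p x * N x y then p x * N x y * Real.log (N x y / r y) else 0)
      = (if 0 < p x * N x y then p x * N x y * Real.log (N x y / q y) else 0)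
        + (if 0 < p x * N x y then p x * N x y * Real.log (q y / r y) else 0) := by
    intro x y
    by_cases h : 0 < p x * N x y
    · simp only [h, if_true]
      have hNpos : 0 < N x y := by
        rcases (hN x y).lt_or_eq with h' | h'
        · exact h'
        · exfalso; rw [← h'] at h; simp at h
      have hqpos : 0 < q y := lt_of_lt_of_le h (hpqle x y)
      have hrpos : 0 < r y := hr x y h
      rw [Real.log_div hNpos.ne' hrpos.ne', Real.log_div hNpos.ne' hqpos.ne',
        Real.log_div hqpos.ne' hrpos.ne']
      ring
    · simp [h]
  have step2 : ∀ y, ∑ x, (if 0 < p x * N x y then p x * N x y * Real.log (q y / r y) else 0)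
      = (if 0 < q y then q y * Real.log (q y / r y) else 0) := by
    intro y
    have e : ∀ x, (if 0 < p x * N x y then p x * N x y * Real.log (q y / r y) else 0)
        = (if 0 < p x * N x y then p x * N x y else 0) * Real.log (q y / r y) := by
      intro x; by_cases h : 0 < p x * N x y <;> simp [h]
    rw [Finset.sum_congr rfl fun x _ => e x, ← Finset.sum_mul]
    have e2 : ∑ x, (if 0 < p x * N x y then p x * N x y else 0) = q y := by
      rw [hq]
      refine Finset.sum_congr rfl fun x _ => ?_
      by_cases h : 0 < p x * N x y
      · simp [h]
      · simp [h, le_antisymm (not_lt.1 h) (mul_nonneg (hp x) (hN x y))]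
    rw [e2]
    by_cases h : 0 < q y
    · simp [h]
    · rw [if_neg h, le_antisymm (not_lt.1 h) (hq0 y)]; ring
  calc ∑ x, ∑ y, (if 0 < p x * N x y then p x * N x y * Real.log (N x y / r y) else 0)
      = ∑ x, ∑ y, ((if 0 < p x * N x y then p x * N x y * Real.log (N x y / q y) else 0)
        + (if 0 < p x * N x y then p x * N x y * Real.log (q y / r y) else 0)) := by
        exact Finset.sum_congr rfl fun x _ => Finset.sum_congr rfl fun y _ => step1 x y
    _ = mutInfo p N + ∑ x, ∑ y, (if 0 < p x * N x y then p x * N x y * Real.log (q y / r y) else 0) := by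
        simp only [Finset.sum_add_distrib]
        rfl
    _ = mutInfo p N + ∑ y, (if 0 < q y then q y * Real.log (q y / r y) else 0) := by
        rw [Finset.sum_comm]
        exact congrArg _ (Finset.sum_congr rfl fun y _ => step2 y)

/-- mutInfo as a manifestly continuous expression in p. -/
lemma mutInfo_eq_ent (p : X → ℝ) (N : X → Y → ℝ)
    (hp : ∀ x, 0 ≤ p x) (hN : ∀ x y, 0 ≤ N x y) :
    mutInfo p N = (∑ x, p x * (∑ y, N x y * Real.log (N x y)))
      - ∑ y, (∑ x, p x * N x y) * Real.log (∑ x, p x * N x y) := by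
  set q : Y → ℝ := fun y => ∑ x, p x * N x y with hq
  have hq0 : ∀ y, 0 ≤ q y := fun y =>
    Finset.sum_nonneg fun x _ => mul_nonneg (hp x) (hN x y)
  have hpqle : ∀ x y, p x * N x y ≤ q y := fun x y =>
    Finset.single_le_sum (fun x' _ => mul_nonneg (hp x') (hN x' y)) (Finset.mem_univ x)
  have step1 : ∀ x y, (if 0 < p x * N x y then p x * N x y * Real.log (N x y / q y) else 0)
      = p x * (N x y * Real.log (N x y))
        - (if 0 < p x * N x y then p x * N x y else 0) * Real.log (q y) := by
    intro x y
    by_cases h : 0 < p x * N x y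
    · simp only [h, if_true]
      have hNpos : 0 < N x y := by
        rcases (hN x y).lt_or_eq with h' | h'
        · exact h'
        · exfalso; rw [← h'] at h; simp at h
      have hqpos : 0 < q y := lt_of_lt_of_le h (hpqle x y)
      rw [Real.log_div hNpos.ne' hqpos.ne']
      ring
    · have h0 : p x * N x y = 0 := le_antisymm (not_lt.1 h) (mul_nonneg (hp x) (hN x y))
      rcases mul_eq_zero.1 h0 with h' | h'
      · simp [h, h']
      · simp [h, h', h0]
  have col : ∀ y, ∑ x, (if 0 < p x * N x y then p x * N x y else 0) * Real.log (q y)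
      = q y * Real.log (q y) := by
    intro y
    rw [← Finset.sum_mul]
    congr 1
    rw [hq]
    refine Finset.sum_congr rfl fun x _ => ?_
    by_cases h : 0 < p x * N x y
    · simp [h]
    · simp [h, le_antisymm (not_lt.1 h) (mul_nonneg (hp x) (hN x y))]
  have : mutInfo p N = ∑ x, ∑ y, ((p x * (N x y * Real.log (N x y)))
      - (if 0 < p x * N x y then p x * N x y else 0) * Real.log (q y)) := by
    exact Finset.sum_congr rfl fun x _ => Finset.sum_congr rfl fun y _ => step1 x y
  rw [this]
  simp only [Finset.sum_sub_distrib]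
  congr 1
  · exact Finset.sum_congr rfl fun x _ => (Finset.mul_sum _ _ _).symm
  · rw [Finset.sum_comm]
    exact Finset.sum_congr rfl fun y _ => col y

open Classical in
lemma mutInfo_dirac (x₀ : X) (N : X → Y → ℝ) (hN : ∀ x y, 0 ≤ N x y) :
    mutInfo (fun x => if x = x₀ then (1:ℝ) else 0) N = 0 := by
  classical
  unfold mutInfo
  refine Finset.sum_eq_zero fun x _ => Finset.sum_eq_zero fun y _ => ?_
  by_cases hx : x = x₀
  · subst hx
    simp only [if_true]
    have : (∑ x', (if x' = x then (1:ℝ) else 0) * N x' y) = N x y := by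
      rw [Finset.sum_eq_single x]
      · simp
      · intro x' _ hx'; simp [hx']
      · intro h; exact absurd (Finset.mem_univ x) h
    rw [this]
    by_cases h : 0 < 1 * N x y
    · rw [if_pos h]
      have hpos : 0 < N x y := by linarith [h]
      rw [div_self hpos.ne', Real.log_one]
      ring
    · rw [if_neg h]
  · simp [hx]

lemma isDist_iff_mem_stdSimplex (p : X → ℝ) : IsDist p ↔ p ∈ stdSimplex ℝ X := Iff.rfl

/-- capacity attained on the simplex -/
lemma capacity_attained [Nonempty X] (N : X → Y → ℝ) (hN : ∀ x y, 0 ≤ N x y) :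
    ∃ p, IsDist p ∧ capacity N = mutInfo p N ∧
      ∀ p', IsDist p' → mutInfo p' N ≤ mutInfo p N := by
  classical
  have hcont : ContinuousOn (fun p : X → ℝ => mutInfo p N) (stdSimplex ℝ X) := by
    have hc2 : Continuous fun p : X → ℝ =>
        (∑ x, p x * (∑ y, N x y * Real.log (N x y)))
          - ∑ y, (∑ x, p x * N x y) * Real.log (∑ x, p x * N x y) := by
      refine Continuous.sub ?_ ?_
      · exact continuous_finset_sum _ fun x _ =>
          (continuous_apply x).mul continuous_const
      · refine continuous_finset_sum _ fun y _ => ?_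
        have hq : Continuous fun p : X → ℝ => ∑ x, p x * N x y :=
          continuous_finset_sum _ fun x _ => (continuous_apply x).mul continuous_const
        exact Real.continuous_mul_log.comp hq
    refine hc2.continuousOn.congr fun p hp => ?_
    exact mutInfo_eq_ent p N (fun x => hp.1 x) hN
  have hne : (stdSimplex ℝ X).Nonempty := ⟨_, ite_eq_mem_stdSimplex ℝ (Classical.arbitrary X)⟩
  obtain ⟨p, hpmem, hmax⟩ := (isCompact_stdSimplex ℝ X).exists_isMaxOn hne hcont
  refine ⟨p, hpmem, ?_, fun p' hp' => hmax hp'⟩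
  have : capacity N = sSup { c | ∃ p, IsDist p ∧ c = mutInfo p N } := rfl
  rw [this]
  refine IsGreatest.csSup_eq ⟨⟨p, hpmem, rfl⟩, ?_⟩
  rintro c ⟨p', hp', rfl⟩
  exact hmax hp'

end Main
section Lower
variable {X Y : Type*} [Fintype X] [Fintype Y]

open Classical in
lemma log_le_capacity [Nonempty X] [Nonempty Y]
    (Γ : X → Y → ℝ) (hΓ : ∀ x y, Γ x y = 0 ∨ Γ x y = 1)
    (A : ℝ) (hA1 : 1 ≤ A)
    (w : X → ℝ) (hw0 : ∀ x, 0 ≤ w x) (hwf : ∀ y, ∑ x, w x * Γ x y ≤ 1)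
    (hwsum : ∑ x, w x = A)
    (N : X → Y → ℝ) (hch : IsChannel N) (hsupp : SupportedOn Γ N) :
    Real.log A ≤ capacity N := by
  obtain ⟨hN0, hN1⟩ := hch
  have hΓ0 : ∀ x y, 0 ≤ Γ x y := fun x y => by rcases hΓ x y with h | h <;> rw [h] <;> norm_num
  obtain ⟨p, hpdist, hcapeq, hmax⟩ := capacity_attained N hN0
  set C := mutInfo p N with hC
  have hApos : (0:ℝ) < A := lt_of_lt_of_le one_pos hA1
  -- C ≥ 0
  have hC0 : 0 ≤ C := by
    have hd : IsDist (fun x => if x = Classical.arbitrary X then (1:ℝ) else 0) := by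
      constructor
      · intro x; by_cases h : x = Classical.arbitrary X <;> simp [h]
      · rw [Finset.sum_ite_eq' Finset.univ _ (fun _ => (1:ℝ))]; simp
    have := hmax _ hd
    rwa [mutInfo_dirac _ N hN0] at this
  set q : Y → ℝ := fun y => ∑ x, p x * N x y with hq
  have hq0 : ∀ y, 0 ≤ q y := fun y =>
    Finset.sum_nonneg fun x _ => mul_nonneg (hpdist.1 x) (hN0 x y)
  have hqsum : ∑ y, q y = 1 := by
    rw [hq]
    simp only []
    rw [Finset.sum_comm]
    calc ∑ x, ∑ y, p x * N x y = ∑ x, p x * ∑ y, N x y := by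
          exact Finset.sum_congr rfl fun x _ => (Finset.mul_sum _ _ _).symm
      _ = ∑ x, p x := by
          exact Finset.sum_congr rfl fun x _ => by rw [hN1 x, mul_one]
      _ = 1 := hpdist.2
  -- choose x₀ with small covered q-mass
  have hx₀ : ∃ x₀, ∑ y, Γ x₀ y * q y ≤ 1 / A := by
    by_contra hcon
    push_neg at hcon
    have hb : ∑ x, w x * (∑ y, Γ x y * q y) ≤ 1 := by
      calc ∑ x, w x * (∑ y, Γ x y * q y)
            = ∑ x, ∑ y, w x * (Γ x y * q y) := by
              exact Finset.sum_congr rfl fun x _ => Finset.mul_sum _ _ _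
        _ = ∑ y, ∑ x, w x * (Γ x y * q y) := Finset.sum_comm
        _ = ∑ y, (∑ x, w x * Γ x y) * q y := by
              refine Finset.sum_congr rfl fun y _ => ?_
              rw [Finset.sum_mul]
              exact Finset.sum_congr rfl fun x _ => by ring
        _ ≤ ∑ y, q y := Finset.sum_le_sum fun y _ => by
            have := hwf y
            nlinarith [hq0 y]
        _ = 1 := hqsum
    have hxw : ∃ x, 0 < w x := by
      by_contra h
      push_neg at h
      have : ∑ x, w x = 0 := Finset.sum_eq_zero fun x _ => le_antisymm (h x) (hw0 x)
      rw [hwsum] at this; linarith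
    obtain ⟨x₁, hx₁⟩ := hxw
    have hlt : ∑ x, w x * (1 / A) < ∑ x, w x * (∑ y, Γ x y * q y) := by
      refine Finset.sum_lt_sum (fun x _ => ?_) ⟨x₁, Finset.mem_univ x₁, ?_⟩
      · exact mul_le_mul_of_nonneg_left (hcon x).le (hw0 x)
      · exact (mul_lt_mul_iff_right₀ hx₁).2 (hcon x₁)
    rw [← Finset.sum_mul, hwsum, mul_one_div, div_self hApos.ne'] at hlt
    linarith
  obtain ⟨x₀, hx₀s⟩ := hx₀
  -- main estimate for each t ∈ (0,1)
  have key : ∀ t ∈ Set.Ioo (0:ℝ) 1, - Real.log ((1-t)/A + t) ≤ C := by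
    intro t ht
    obtain ⟨ht0, ht1⟩ := ht
    have h1t : 0 < 1 - t := by linarith
    set pt : X → ℝ := fun x => (1-t) * p x + t * (if x = x₀ then 1 else 0) with hpt
    have hpt0 : ∀ x, 0 ≤ pt x := by
      intro x
      by_cases h : x = x₀ <;> simp [hpt, h] <;> nlinarith [hpdist.1 x₀, hpdist.1 x]
    have hptdist : IsDist pt := by
      constructor
      · exact hpt0
      · rw [hpt]
        rw [Finset.sum_add_distrib, ← Finset.mul_sum, ← Finset.mul_sum, hpdist.2]
        rw [Finset.sum_ite_eq' Finset.univ x₀ (fun _ => (1:ℝ))]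
        simp
    set qt : Y → ℝ := fun y => (1-t) * q y + t * N x₀ y with hqt
    have hqtsum : ∀ y, ∑ x, pt x * N x y = qt y := by
      intro y
      have e : ∑ x, pt x * N x y = (1-t) * (∑ x, p x * N x y)
          + t * ∑ x, (if x = x₀ then (1:ℝ) else 0) * N x y := by
        rw [Finset.mul_sum, Finset.mul_sum, ← Finset.sum_add_distrib]
        refine Finset.sum_congr rfl fun x _ => ?_
        simp only [hpt]
        ring
      have e2 : ∑ x, (if x = x₀ then (1:ℝ) else 0) * N x y = N x₀ y := by
        simp [ite_mul]
      rw [e, e2]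
    have hqt0 : ∀ y, 0 ≤ qt y := fun y => by
      have := hq0 y; have := hN0 x₀ y
      simp only [hqt]; nlinarith
    have hqtpos : ∀ x y, 0 < p x * N x y → 0 < qt y := by
      intro x y h
      have hle : p x * N x y ≤ q y :=
        Finset.single_le_sum (fun x' _ => mul_nonneg (hpdist.1 x') (hN0 x' y)) (Finset.mem_univ x)
      have : 0 < q y := lt_of_lt_of_le h hle
      have := hN0 x₀ y
      simp only [hqt]; nlinarith
    -- (a)
    have ha : C ≤ ∑ x, ∑ y, (if 0 < p x * N x y then p x * N x y * Real.log (N x y / qt y) else 0) := by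
      rw [mutInfo_decomp p N qt hpdist.1 hN0 hqtpos]
      have hD : 0 ≤ ∑ y, (if 0 < q y then q y * Real.log (q y / qt y) else 0) := by
        refine G1 q qt hq0 hqsum (fun y hy => by
          have := hN0 x₀ y; simp only [hqt]; nlinarith) ?_
        calc ∑ y, (if 0 < q y then qt y else 0) ≤ ∑ y, qt y :=
              Finset.sum_le_sum fun y _ => by
                by_cases h : 0 < q y <;> simp [h, hqt0 y]
          _ = 1 := by
              simp only [hqt]
              rw [Finset.sum_add_distrib, ← Finset.mul_sum, ← Finset.mul_sum, hqsum, hN1 x₀]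
              ring
      have hDeq : (∑ y, (if 0 < (∑ x, p x * N x y) then
            (∑ x, p x * N x y) * Real.log ((∑ x, p x * N x y) / qt y) else 0))
          = ∑ y, (if 0 < q y then q y * Real.log (q y / qt y) else 0) := rfl
      rw [hDeq]
      linarith
    -- (b)+(c): mutInfo pt N decomposition
    have hb : mutInfo pt N = (1-t) * (∑ x, ∑ y, (if 0 < p x * N x y then
          p x * N x y * Real.log (N x y / qt y) else 0))
        + t * (∑ y, (if 0 < N x₀ y then N x₀ y * Real.log (N x₀ y / qt y) else 0)) := by
      have e0 : mutInfo pt N = ∑ x, ∑ y, (if 0 < pt x * N x y then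
          pt x * N x y * Real.log (N x y / qt y) else 0) := by
        unfold mutInfo
        exact Finset.sum_congr rfl fun x _ => Finset.sum_congr rfl fun y _ => by
          rw [hqtsum y]
      rw [e0]
      have e1 : ∀ x y, (if 0 < pt x * N x y then pt x * N x y * Real.log (N x y / qt y) else 0)
          = (1-t) * (if 0 < p x * N x y then p x * N x y * Real.log (N x y / qt y) else 0)
            + t * (if x = x₀ then (if 0 < N x₀ y then N x₀ y * Real.log (N x₀ y / qt y) else 0) else 0) := by
        intro x y
        by_cases hx : x = x₀
        · rw [hx]
          have hpx0 : pt x₀ = (1-t) * p x₀ + t := by simp [hpt]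
          rw [if_pos rfl]
          by_cases hn : 0 < N x₀ y
          · have hcond : 0 < pt x₀ * N x₀ y := by
              rw [hpx0]; exact mul_pos (by nlinarith [hpdist.1 x₀]) hn
            rw [if_pos hcond, if_pos hn, hpx0]
            by_cases hpx : 0 < p x₀ * N x₀ y
            · rw [if_pos hpx]; ring
            · have h0 : p x₀ * N x₀ y = 0 :=
                le_antisymm (not_lt.1 hpx) (mul_nonneg (hpdist.1 x₀) (hN0 x₀ y))
              have hpz : p x₀ = 0 := by
                rcases mul_eq_zero.1 h0 with h | h
                · exact h
                · exact absurd h hn.ne'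
              rw [if_neg hpx, hpz]; ring
          · have hn0 : N x₀ y = 0 := le_antisymm (not_lt.1 hn) (hN0 x₀ y)
            rw [if_neg hn, if_neg (by rw [hn0]; simp : ¬ 0 < pt x₀ * N x₀ y),
              if_neg (by rw [hn0]; simp : ¬ 0 < p x₀ * N x₀ y)]
            ring
        · have hpx0 : pt x = (1-t) * p x := by simp [hpt, hx]
          rw [if_neg hx, hpx0]
          by_cases hpx : 0 < p x * N x y
          · have hcond : 0 < (1-t) * p x * N x y := by
              rw [mul_assoc]; exact mul_pos h1t hpx
            rw [if_pos hcond, if_pos hpx]; ring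
          · have h0 : p x * N x y = 0 :=
              le_antisymm (not_lt.1 hpx) (mul_nonneg (hpdist.1 x) (hN0 x y))
            rw [if_neg (by rw [mul_assoc, h0]; simp : ¬ 0 < (1-t) * p x * N x y), if_neg hpx]
            ring
      calc ∑ x, ∑ y, (if 0 < pt x * N x y then pt x * N x y * Real.log (N x y / qt y) else 0)
          = ∑ x, ∑ y, ((1-t) * (if 0 < p x * N x y then p x * N x y * Real.log (N x y / qt y) else 0)
            + t * (if x = x₀ then (if 0 < N x₀ y then N x₀ y * Real.log (N x₀ y / qt y) else 0) else 0)) :=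
            Finset.sum_congr rfl fun x _ => Finset.sum_congr rfl fun y _ => e1 x y
        _ = _ := by
            simp only [Finset.sum_add_distrib, ← Finset.mul_sum]
            congr 1
            congr 1
            rw [Finset.sum_comm]
            rw [Finset.sum_congr rfl (fun y (_ : y ∈ Finset.univ) =>
              Finset.sum_ite_eq' Finset.univ x₀
                (fun _ => (if 0 < N x₀ y then N x₀ y * Real.log (N x₀ y / qt y) else 0)))]
            simp
    -- (d)
    have hd : (∑ y, (if 0 < N x₀ y then N x₀ y * Real.log (N x₀ y / qt y) else 0)) ≤ C := by
      have hmt := hmax pt hptdist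
      rw [hb] at hmt
      have := ha
      nlinarith
    -- (e) G2
    have he := G2 (fun y => N x₀ y) qt (hN0 x₀) (hN1 x₀)
      (fun y hy => by have := hq0 y; simp only [hqt]; nlinarith)
    set Bt := ∑ y, (if 0 < N x₀ y then qt y else 0) with hBt
    -- (f) bounds on Bt
    have hBtub : Bt ≤ (1-t) * (∑ y, Γ x₀ y * q y) + t := by
      have e1 : ∀ y, (if 0 < N x₀ y then qt y else 0)
          = (1-t) * (if 0 < N x₀ y then q y else 0) + t * (if 0 < N x₀ y then N x₀ y else 0) := by
        intro y
        by_cases h : 0 < N x₀ y <;> simp [h, hqt] <;> ring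
      rw [hBt, Finset.sum_congr rfl fun y _ => e1 y, Finset.sum_add_distrib,
        ← Finset.mul_sum, ← Finset.mul_sum]
      have h2 : ∑ y, (if 0 < N x₀ y then q y else 0) ≤ ∑ y, Γ x₀ y * q y := by
        refine Finset.sum_le_sum fun y _ => ?_
        by_cases h : 0 < N x₀ y
        · rw [if_pos h, hsupp x₀ y h, one_mul]
        · rw [if_neg h]; exact mul_nonneg (hΓ0 x₀ y) (hq0 y)
      have h3 : ∑ y, (if 0 < N x₀ y then N x₀ y else 0) = 1 := by
        rw [sum_if_pos_eq _ (hN0 x₀), hN1 x₀]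
      rw [h3, mul_one]
      nlinarith
    have hBtpos : 0 < Bt := by
      have h3 : ∑ y, (if 0 < N x₀ y then N x₀ y else 0) = 1 := by
        rw [sum_if_pos_eq _ (hN0 x₀), hN1 x₀]
      have e1 : Bt = (1-t) * (∑ y, (if 0 < N x₀ y then q y else 0)) + t := by
        have e2 : ∀ y, (if 0 < N x₀ y then qt y else 0)
            = (1-t) * (if 0 < N x₀ y then q y else 0) + t * (if 0 < N x₀ y then N x₀ y else 0) := by
          intro y
          by_cases h : 0 < N x₀ y <;> simp [h, hqt] <;> ring
        rw [hBt, Finset.sum_congr rfl fun y _ => e2 y, Finset.sum_add_distrib,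
          ← Finset.mul_sum, ← Finset.mul_sum, h3, mul_one]
      rw [e1]
      have : 0 ≤ ∑ y, (if 0 < N x₀ y then q y else 0) :=
        Finset.sum_nonneg fun y _ => by by_cases h : 0 < N x₀ y <;> simp [h, hq0 y]
      nlinarith
    have hBtub2 : Bt ≤ (1-t)/A + t := by
      have : (1-t) * (∑ y, Γ x₀ y * q y) ≤ (1-t) * (1/A) :=
        mul_le_mul_of_nonneg_left hx₀s h1t.le
      calc Bt ≤ (1-t) * (∑ y, Γ x₀ y * q y) + t := hBtub
        _ ≤ (1-t) * (1/A) + t := by linarith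
        _ = (1-t)/A + t := by ring
    have hlog : Real.log Bt ≤ Real.log ((1-t)/A + t) := Real.log_le_log hBtpos hBtub2
    have hfin : - Real.log Bt ≤ C := le_trans he hd
    linarith
  -- limit as t → 0⁺
  have hlim : Filter.Tendsto (fun t : ℝ => - Real.log ((1-t)/A + t))
      (nhdsWithin 0 (Set.Ioi 0)) (nhds (Real.log A)) := by
    have hc : ContinuousAt (fun t : ℝ => - Real.log ((1-t)/A + t)) 0 := by
      have h1 : ContinuousAt (fun t : ℝ => (1-t)/A + t) 0 := by fun_prop
      have h2 : ((1-(0:ℝ))/A + 0) ≠ 0 := by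
        simp only [sub_zero, add_zero]
        positivity
      exact (h1.log h2).neg
    have : (fun t : ℝ => - Real.log ((1-t)/A + t)) 0 = Real.log A := by
      simp [Real.log_div one_ne_zero hApos.ne']
    rw [← this]
    exact hc.continuousWithinAt.tendsto
  refine le_trans (le_of_tendsto hlim ?_) (le_of_eq hcapeq.symm)
  filter_upwards [Ioo_mem_nhdsGT_of_mem (Set.left_mem_Ico.2 one_pos)] with t ht
  exact key t ht

end Lower
section Duality
variable {X Y : Type*} [Fintype X] [Fintype Y]

open Classical in
lemma lp_duality [Nonempty X] [Nonempty Y]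
    (Γ : X → Y → ℝ) (hΓ : ∀ x y, Γ x y = 0 ∨ Γ x y = 1)
    (hcover : ∀ x, ∃ y, Γ x y = 1) :
    ∃ (w : X → ℝ) (v : Y → ℝ),
      (∀ x, 0 ≤ w x) ∧ (∀ y, ∑ x, w x * Γ x y ≤ 1) ∧ (∑ x, w x = fracPack Γ) ∧
      (∀ y, 0 ≤ v y) ∧ (∀ x, 1 ≤ ∑ y, Γ x y * v y) ∧ (∑ y, v y = fracPack Γ) ∧
      1 ≤ fracPack Γ := by
  have hΓ0 : ∀ x y, 0 ≤ Γ x y := fun x y => by rcases hΓ x y with h | h <;> rw [h] <;> norm_num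
  have hΓ1 : ∀ x y, Γ x y ≤ 1 := fun x y => by rcases hΓ x y with h | h <;> rw [h] <;> norm_num
  -- the game value
  set g : (Y → ℝ) → ℝ :=
    fun r => Finset.univ.inf' Finset.univ_nonempty (fun x => ∑ y, Γ x y * r y) with hg
  have hgcont : Continuous g := by
    refine Continuous.finset_inf'_apply Finset.univ_nonempty fun x _ => ?_
    exact continuous_finset_sum _ fun y _ => continuous_const.mul (continuous_apply y)
  have hsimplexne : (stdSimplex ℝ Y).Nonempty := ⟨_, ite_eq_mem_stdSimplex ℝ (Classical.arbitrary Y)⟩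
  obtain ⟨r, hrmem, hrmax⟩ :=
    (isCompact_stdSimplex ℝ Y).exists_isMaxOn hsimplexne hgcont.continuousOn
  have hr0 : ∀ y, 0 ≤ r y := hrmem.1
  have hrsum : ∑ y, r y = 1 := hrmem.2
  set lam := g r with hlam
  have hlam_le : ∀ x, lam ≤ ∑ y, Γ x y * r y := fun x =>
    Finset.inf'_le _ (Finset.mem_univ x)
  have hcardY : 0 < (Fintype.card Y : ℝ) := by
    have := Fintype.card_pos (α := Y)
    exact_mod_cast this
  have hlam_pos : 0 < lam := by
    have humem : (fun _ : Y => (Fintype.card Y : ℝ)⁻¹) ∈ stdSimplex ℝ Y := by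
      constructor
      · intro y; positivity
      · rw [Finset.sum_const, Finset.card_univ, nsmul_eq_mul, mul_inv_cancel₀ hcardY.ne']
    have hgu : 0 < g (fun _ => (Fintype.card Y : ℝ)⁻¹) := by
      rw [hg]
      rw [Finset.lt_inf'_iff]
      intro x _
      obtain ⟨y₀, hy₀⟩ := hcover x
      refine Finset.sum_pos' (fun y _ => mul_nonneg (hΓ0 x y) (by positivity)) ⟨y₀, Finset.mem_univ y₀, ?_⟩
      rw [hy₀, one_mul]
      positivity
    exact lt_of_lt_of_le hgu (hrmax humem)
  have hlam_le1 : lam ≤ 1 := by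
    refine le_trans (hlam_le (Classical.arbitrary X)) ?_
    calc ∑ y, Γ (Classical.arbitrary X) y * r y ≤ ∑ y, r y :=
          Finset.sum_le_sum fun y _ => by
            have := hΓ1 (Classical.arbitrary X) y
            have := hr0 y
            nlinarith
      _ = 1 := hrsum
  -- weak duality
  have hweak : ∀ w : X → ℝ, (∀ x, 0 ≤ w x) → (∀ y, ∑ x, w x * Γ x y ≤ 1) →
      ∑ x, w x ≤ 1 / lam := by
    intro w hw0 hwf
    have h1 : lam * ∑ x, w x ≤ 1 := by
      calc lam * ∑ x, w x = ∑ x, lam * w x := Finset.mul_sum _ _ _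
        _ ≤ ∑ x, (∑ y, Γ x y * r y) * w x :=
            Finset.sum_le_sum fun x _ => mul_le_mul_of_nonneg_right (hlam_le x) (hw0 x)
        _ = ∑ y, (∑ x, w x * Γ x y) * r y := by
            calc ∑ x, (∑ y, Γ x y * r y) * w x
                = ∑ x, ∑ y, w x * Γ x y * r y := by
                  refine Finset.sum_congr rfl fun x _ => ?_
                  rw [Finset.sum_mul]
                  exact Finset.sum_congr rfl fun y _ => by ring
              _ = ∑ y, ∑ x, w x * Γ x y * r y := Finset.sum_comm
              _ = ∑ y, (∑ x, w x * Γ x y) * r y := by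
                  exact Finset.sum_congr rfl fun y _ => (Finset.sum_mul _ _ _).symm
        _ ≤ ∑ y, r y :=
            Finset.sum_le_sum fun y _ => by
              have := hwf y
              have := hr0 y
              nlinarith
        _ = 1 := hrsum
    rw [le_div_iff₀ hlam_pos]
    linarith [h1, mul_comm lam (∑ x, w x)]
  have hSmem0 : (0:ℝ) ∈ { s | ∃ w : X → ℝ, (∀ x, 0 ≤ w x) ∧ (∀ y, ∑ x, w x * Γ x y ≤ 1) ∧
      s = ∑ x, w x } := ⟨fun _ => 0, fun _ => le_refl 0, fun y => by simp, by simp⟩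
  have hbdd : BddAbove { s | ∃ w : X → ℝ, (∀ x, 0 ≤ w x) ∧ (∀ y, ∑ x, w x * Γ x y ≤ 1) ∧
      s = ∑ x, w x } := by
    refine ⟨1/lam, ?_⟩
    rintro s ⟨w, hw0, hwf, rfl⟩
    exact hweak w hw0 hwf
  have hfp_le : fracPack Γ ≤ 1 / lam := csSup_le ⟨0, hSmem0⟩ (by
    rintro s ⟨w, hw0, hwf, rfl⟩
    exact hweak w hw0 hwf)
  -- Hahn-Banach separation to get an optimal primal solution
  set T : (Y → ℝ) →ₗ[ℝ] (X → ℝ) :=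
    { toFun := fun r' x => ∑ y, Γ x y * r' y
      map_add' := by
        intro a b; funext x
        simp only [Pi.add_apply]
        rw [← Finset.sum_add_distrib]
        exact Finset.sum_congr rfl fun y _ => by ring
      map_smul' := by
        intro c a; funext x
        simp only [Pi.smul_apply, smul_eq_mul, RingHom.id_apply]
        rw [Finset.mul_sum]
        exact Finset.sum_congr rfl fun y _ => by ring } with hT
  set K : Set (X → ℝ) := T '' stdSimplex ℝ Y with hK
  set L : Set (X → ℝ) := { z | ∀ x, lam < z x } with hL
  have hLopen : IsOpen L := by
    have : L = ⋂ x, {z : X → ℝ | lam < z x} := by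
      ext z; simp [hL, Set.mem_iInter]
    rw [this]
    exact isOpen_iInter_of_finite fun x => isOpen_Ioi.preimage (continuous_apply x)
  have hLconv : Convex ℝ L := by
    rintro z1 h1 z2 h2 a b ha hb hab
    intro x
    rcases eq_or_lt_of_le ha with ha' | ha'
    · have hb1 : b = 1 := by linarith
      simp only [Pi.add_apply, Pi.smul_apply, smul_eq_mul, ← ha', hb1]
      have := h2 x
      linarith
    · have h1x := h1 x
      have h2x := h2 x
      simp only [Pi.add_apply, Pi.smul_apply, smul_eq_mul]
      nlinarith
  have hKconv : Convex ℝ K := (convex_stdSimplex ℝ Y).linear_image T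
  have hdisj : Disjoint L K := by
    rw [Set.disjoint_left]
    rintro z hzL ⟨r', hr', rfl⟩
    have : lam < g r' := by
      rw [hg, Finset.lt_inf'_iff]
      intro x _
      exact hzL x
    exact absurd (hrmax hr') (not_le.2 this)
  obtain ⟨f, u, hfL, hfK⟩ := geometric_hahn_banach_open hLconv hLopen hKconv hdisj
  set coef : X → ℝ := fun x => f (Pi.single x 1) with hcoef
  have hrep : ∀ z : X → ℝ, f z = ∑ x, z x * coef x := by
    intro z
    have hz : ∑ x, z x • (Pi.single x (1:ℝ) : X → ℝ) = z := by
      have e : ∀ x, z x • (Pi.single x (1:ℝ) : X → ℝ) = Pi.single x (z x) := by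
        intro x; funext x'
        by_cases h : x' = x <;> simp [Pi.single_apply, h]
      rw [Finset.sum_congr rfl fun x _ => e x, Finset.univ_sum_single]
    conv_lhs => rw [← hz]
    rw [map_sum]
    exact Finset.sum_congr rfl fun x _ => by rw [map_smul, smul_eq_mul]
  have hconst : ∀ c : ℝ, f (fun _ => c) = c * ∑ x, coef x := by
    intro c
    rw [hrep fun _ => c, Finset.mul_sum]
  have hzbase : (fun _ : X => lam + 1) ∈ L := fun x => show lam < lam + 1 by linarith
  have hcoef_nonpos : ∀ x, coef x ≤ 0 := by
    intro x
    by_contra hc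
    push_neg at hc
    set tt := (u - f (fun _ => lam + 1) + 1) / coef x with htt
    have hfz : f (fun _ : X => lam + 1) < u := hfL _ hzbase
    have httpos : 0 < tt := by
      rw [htt]
      apply div_pos
      · linarith
      · exact hc
    have hmem : ((fun _ : X => lam + 1) + tt • (Pi.single x (1:ℝ) : X → ℝ)) ∈ L := by
      intro x'
      simp only [Pi.add_apply, Pi.smul_apply, smul_eq_mul]
      have : 0 ≤ tt * (Pi.single x (1:ℝ) : X → ℝ) x' := by
        refine mul_nonneg httpos.le ?_
        by_cases h : x' = x <;> simp [Pi.single_apply, h]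
      linarith
    have := hfL _ hmem
    rw [map_add, map_smul, smul_eq_mul] at this
    have hfs : f (Pi.single x 1) = coef x := rfl
    rw [hfs, htt, div_mul_cancel₀ _ hc.ne'] at this
    linarith
  set p : X → ℝ := fun x => - coef x with hp
  have hp0 : ∀ x, 0 ≤ p x := fun x => by
    simp only [hp]; linarith [hcoef_nonpos x]
  have hflam : f (fun _ : X => lam) ≤ u := by
    set S0 := ∑ x, coef x with hS0
    have hev : ∀ ε : ℝ, 0 < ε → (lam + ε) * S0 < u := by
      intro ε hε
      have : (fun _ : X => lam + ε) ∈ L := fun x => show lam < lam + ε by linarith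
      have h := hfL _ this
      rwa [hconst] at h
    have hlim : Filter.Tendsto (fun ε : ℝ => (lam + ε) * S0) (nhdsWithin 0 (Set.Ioi 0))
        (nhds (lam * S0)) := by
      have hc2 : Continuous (fun ε : ℝ => (lam + ε) * S0) :=
        (continuous_const.add continuous_id).mul continuous_const
      have := (hc2.tendsto 0).mono_left (nhdsWithin_le_nhds (s := Set.Ioi (0:ℝ)))
      simpa using this
    have : lam * S0 ≤ u := by
      refine le_of_tendsto hlim ?_
      filter_upwards [self_mem_nhdsWithin] with ε hε
      exact (hev ε hε).le
    rw [hconst]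
    exact this
  have hKineq : ∀ y, ∑ x, p x * Γ x y ≤ lam * ∑ x, p x := by
    intro y
    -- use the Dirac measure at y
    have hdmem : (fun y' => if y' = y then (1:ℝ) else 0) ∈ stdSimplex ℝ Y := by
      constructor
      · intro y'; by_cases h : y' = y <;> simp [h]
      · rw [Finset.sum_ite_eq' Finset.univ _ (fun _ => (1:ℝ))]; simp
    have hTd : T (fun y' => if y' = y then (1:ℝ) else 0) = fun x => Γ x y := by
      funext x
      have : T (fun y' => if y' = y then (1:ℝ) else 0) x
          = ∑ y', Γ x y' * (if y' = y then (1:ℝ) else 0) := rfl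
      rw [this]
      rw [Finset.sum_congr rfl (fun y' _ => mul_ite (y' = y) (Γ x y') 1 0)]
      simp only [mul_one, mul_zero]
      rw [Finset.sum_ite_eq' Finset.univ y (fun y' => Γ x y')]
      simp
    have hKz : u ≤ f (fun x => Γ x y) := by
      have := hfK _ ⟨_, hdmem, rfl⟩
      rwa [hTd] at this
    rw [hrep] at hKz
    have h1 : ∑ x, Γ x y * coef x = - ∑ x, p x * Γ x y := by
      rw [← Finset.sum_neg_distrib]
      exact Finset.sum_congr rfl fun x _ => by simp [hp]; ring
    rw [h1] at hKz
    have h2 : f (fun _ : X => lam) = - (lam * ∑ x, p x) := by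
      rw [hconst]
      have : ∑ x, coef x = - ∑ x, p x := by
        rw [← Finset.sum_neg_distrib]
        exact Finset.sum_congr rfl fun x _ => by simp [hp]
      rw [this]; ring
    rw [h2] at hflam
    linarith
  set P := ∑ x, p x with hP
  have hP0 : 0 ≤ P := Finset.sum_nonneg fun x _ => hp0 x
  have hPpos : 0 < P := by
    rcases eq_or_lt_of_le hP0 with h0 | h0
    · exfalso
      have hallzero : ∀ x, p x = 0 := by
        intro x
        have := (Finset.sum_eq_zero_iff_of_nonneg (fun x _ => hp0 x)).1 h0.symm
        exact this x (Finset.mem_univ x)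
      have hcoef0 : ∀ x, coef x = 0 := by
        intro x
        have := hallzero x
        simp only [hp] at this
        linarith
      have h1 : f (fun _ : X => lam + 1) = 0 := by
        rw [hconst, Finset.sum_eq_zero fun x _ => hcoef0 x, mul_zero]
      have h2 := hfL _ hzbase
      rw [h1] at h2
      have h5 : u ≤ f (T r) := hfK _ ⟨r, hrmem, rfl⟩
      rw [hrep] at h5
      rw [Finset.sum_eq_zero (fun x _ => by rw [hcoef0 x, mul_zero])] at h5
      linarith
    · exact h0
  have hlamP : 0 < lam * P := mul_pos hlam_pos hPpos
  set w : X → ℝ := fun x => p x / (lam * P) with hw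
  have hw0 : ∀ x, 0 ≤ w x := fun x => div_nonneg (hp0 x) hlamP.le
  have hwf : ∀ y, ∑ x, w x * Γ x y ≤ 1 := by
    intro y
    have e : ∑ x, w x * Γ x y = (∑ x, p x * Γ x y) / (lam * P) := by
      rw [Finset.sum_div]
      exact Finset.sum_congr rfl fun x _ => by rw [hw]; ring
    rw [e, div_le_one hlamP]
    exact hKineq y
  have hwsum : ∑ x, w x = 1 / lam := by
    have e : ∑ x, w x = P / (lam * P) := by
      rw [Finset.sum_div]
    rw [e]
    field_simp
  have hge : 1 / lam ≤ fracPack Γ := le_csSup hbdd ⟨w, hw0, hwf, hwsum.symm⟩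
  have hfp : fracPack Γ = 1 / lam := le_antisymm hfp_le hge
  -- dual solution
  refine ⟨w, fun y => r y / lam, hw0, hwf, by rw [hwsum, hfp], ?_, ?_, ?_, ?_⟩
  · intro y
    exact div_nonneg (hr0 y) hlam_pos.le
  · intro x
    have e : ∑ y, Γ x y * (r y / lam) = (∑ y, Γ x y * r y) / lam := by
      rw [Finset.sum_div]
      exact Finset.sum_congr rfl fun y _ => by ring
    rw [e, le_div_iff₀ hlam_pos, one_mul]
    exact hlam_le x
  · rw [← Finset.sum_div, hrsum, hfp]
  · rw [hfp]
    rw [le_div_iff₀ hlam_pos, one_mul]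
    exact hlam_le1

end Duality
section Upper
variable {X Y : Type*} [Fintype X] [Fintype Y]

lemma exists_good_channel [Nonempty X] [Nonempty Y]
    (Γ : X → Y → ℝ) (hΓ : ∀ x y, Γ x y = 0 ∨ Γ x y = 1)
    (A : ℝ) (hA1 : 1 ≤ A)
    (v : Y → ℝ) (hv0 : ∀ y, 0 ≤ v y) (hvcov : ∀ x, 1 ≤ ∑ y, Γ x y * v y)
    (hvsum : ∑ y, v y = A) :
    ∃ N₀ : X → Y → ℝ, IsChannel N₀ ∧ SupportedOn Γ N₀ ∧
      ∀ p, IsDist p → mutInfo p N₀ ≤ Real.log A := by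
  have hΓ0 : ∀ x y, 0 ≤ Γ x y := fun x y => by rcases hΓ x y with h | h <;> rw [h] <;> norm_num
  have hApos : (0:ℝ) < A := lt_of_lt_of_le one_pos hA1
  set c : X → ℝ := fun x => ∑ y, Γ x y * v y with hc
  have hc1 : ∀ x, 1 ≤ c x := hvcov
  have hcpos : ∀ x, 0 < c x := fun x => lt_of_lt_of_le one_pos (hc1 x)
  set N₀ : X → Y → ℝ := fun x y => Γ x y * v y / c x with hN₀
  have hN0 : ∀ x y, 0 ≤ N₀ x y := fun x y =>
    div_nonneg (mul_nonneg (hΓ0 x y) (hv0 y)) (hcpos x).le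
  have hN1 : ∀ x, ∑ y, N₀ x y = 1 := fun x => by
    rw [hN₀]
    simp only []
    rw [← Finset.sum_div]
    exact div_self (hcpos x).ne'
  have hsupp : SupportedOn Γ N₀ := by
    intro x y h
    rcases hΓ x y with h0 | h1
    · exfalso
      rw [hN₀] at h
      simp only [h0, zero_mul, zero_div] at h
      exact lt_irrefl 0 h
    · exact h1
  refine ⟨N₀, ⟨hN0, hN1⟩, hsupp, ?_⟩
  intro p hp
  set r : Y → ℝ := fun y => v y / A with hr
  have hr0 : ∀ y, 0 ≤ r y := fun y => div_nonneg (hv0 y) hApos.le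
  have hrsum : ∑ y, r y = 1 := by
    rw [hr, ← Finset.sum_div, hvsum, div_self hApos.ne']
  have hNpos_v : ∀ x y, 0 < N₀ x y → 0 < v y := by
    intro x y h
    rcases (hv0 y).lt_or_eq with h' | h'
    · exact h'
    · exfalso
      rw [hN₀] at h
      simp only [← h', mul_zero, zero_div] at h
      exact lt_irrefl 0 h
  have hprod_pos : ∀ x y, 0 < p x * N₀ x y → 0 < N₀ x y := by
    intro x y h
    rcases (hN0 x y).lt_or_eq with h' | h'
    · exact h'
    · exfalso; rw [← h', mul_zero] at h; exact lt_irrefl 0 h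
  have hrpos : ∀ x y, 0 < p x * N₀ x y → 0 < r y := fun x y h =>
    div_pos (hNpos_v x y (hprod_pos x y h)) hApos
  have hdecomp := mutInfo_decomp p N₀ r hp.1 hN0 hrpos
  set q : Y → ℝ := fun y => ∑ x, p x * N₀ x y with hq
  have hq0 : ∀ y, 0 ≤ q y := fun y =>
    Finset.sum_nonneg fun x _ => mul_nonneg (hp.1 x) (hN0 x y)
  have hqsum : ∑ y, q y = 1 := by
    rw [hq]
    simp only []
    rw [Finset.sum_comm]
    calc ∑ x, ∑ y, p x * N₀ x y = ∑ x, p x * ∑ y, N₀ x y :=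
          Finset.sum_congr rfl fun x _ => (Finset.mul_sum _ _ _).symm
      _ = ∑ x, p x := Finset.sum_congr rfl fun x _ => by rw [hN1 x, mul_one]
      _ = 1 := hp.2
  have hDnonneg : 0 ≤ ∑ y, (if 0 < q y then q y * Real.log (q y / r y) else 0) := by
    refine G1 q r hq0 hqsum (fun y hy => ?_) ?_
    · have : ∃ x, 0 < p x * N₀ x y := by
        by_contra hcon
        push_neg at hcon
        have : q y = 0 := le_antisymm
          (Finset.sum_nonpos fun x _ => not_lt.1 (fun h => absurd h (not_lt.2 (hcon x))) )
          (hq0 y)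
        rw [this] at hy; exact lt_irrefl 0 hy
      obtain ⟨x, hx⟩ := this
      exact hrpos x y hx
    · calc ∑ y, (if 0 < q y then r y else 0) ≤ ∑ y, r y :=
            Finset.sum_le_sum fun y _ => by
              by_cases h : 0 < q y <;> simp [h, hr0 y]
        _ = 1 := hrsum
  have hLHS : ∑ x, ∑ y, (if 0 < p x * N₀ x y then
      p x * N₀ x y * Real.log (N₀ x y / r y) else 0) ≤ Real.log A := by
    have hterm : ∀ x y, (if 0 < p x * N₀ x y then
        p x * N₀ x y * Real.log (N₀ x y / r y) else 0)
        ≤ (if 0 < p x * N₀ x y then p x * N₀ x y else 0) * Real.log A := by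
      intro x y
      by_cases h : 0 < p x * N₀ x y
      · simp only [h, if_true]
        have hNp : 0 < N₀ x y := hprod_pos x y h
        have hvp : 0 < v y := hNpos_v x y hNp
        have hΓ1 : Γ x y = 1 := hsupp x y hNp
        have hratio : N₀ x y / r y = A / c x := by
          rw [hN₀, hr]
          simp only [hΓ1, one_mul]
          have h1 : v y ≠ 0 := hvp.ne'
          have h2 : c x ≠ 0 := (hcpos x).ne'
          have h3 : A ≠ 0 := hApos.ne'
          field_simp
        have hratio_le : N₀ x y / r y ≤ A := by
          rw [hratio]
          exact div_le_self hApos.le (hc1 x)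
        have hratio_pos : 0 < N₀ x y / r y := div_pos hNp (div_pos hvp hApos)
        exact mul_le_mul_of_nonneg_left (Real.log_le_log hratio_pos hratio_le) h.le
      · simp [h]
    calc ∑ x, ∑ y, (if 0 < p x * N₀ x y then p x * N₀ x y * Real.log (N₀ x y / r y) else 0)
        ≤ ∑ x, ∑ y, (if 0 < p x * N₀ x y then p x * N₀ x y else 0) * Real.log A :=
          Finset.sum_le_sum fun x _ => Finset.sum_le_sum fun y _ => hterm x y
      _ = (∑ x, ∑ y, (if 0 < p x * N₀ x y then p x * N₀ x y else 0)) * Real.log A := by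
          rw [Finset.sum_mul]
          exact Finset.sum_congr rfl fun x _ => (Finset.sum_mul _ _ _).symm
      _ = Real.log A := by
          have e : ∀ x y, (if 0 < p x * N₀ x y then p x * N₀ x y else 0) = p x * N₀ x y := by
            intro x y
            by_cases h : 0 < p x * N₀ x y
            · simp [h]
            · simp [h, le_antisymm (not_lt.1 h) (mul_nonneg (hp.1 x) (hN0 x y))]
          rw [Finset.sum_congr rfl fun x _ => Finset.sum_congr rfl fun y _ => e x y]
          have : ∑ x, ∑ y, p x * N₀ x y = 1 := by
            calc ∑ x, ∑ y, p x * N₀ x y = ∑ x, p x * ∑ y, N₀ x y :=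
                  Finset.sum_congr rfl fun x _ => (Finset.mul_sum _ _ _).symm
              _ = ∑ x, p x := Finset.sum_congr rfl fun x _ => by rw [hN1 x, mul_one]
              _ = 1 := hp.2
          rw [this, one_mul]
  have hDeq : (∑ y, (if 0 < (∑ x, p x * N₀ x y) then
        (∑ x, p x * N₀ x y) * Real.log ((∑ x, p x * N₀ x y) / r y) else 0))
      = ∑ y, (if 0 < q y then q y * Real.log (q y / r y) else 0) := rfl
  rw [hDeq] at hdecomp
  linarith
end Upper

/-- The minimum Shannon capacity over all channels supported on Γ equals
log α*(Γ), and is attained. -/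
theorem min_capacity_eq_log_fracPack
    {X Y : Type*} [Fintype X] [Fintype Y] [Nonempty X] [Nonempty Y]
    (Γ : X → Y → ℝ) (hΓ : ∀ x y, Γ x y = 0 ∨ Γ x y = 1)
    (hcover : ∀ x, ∃ y, Γ x y = 1) :
    IsLeast { c | ∃ N, IsChannel N ∧ SupportedOn Γ N ∧ c = capacity N }
      (Real.log (fracPack Γ)) := by
  obtain ⟨w, v, hw0, hwf, hwsum, hv0, hvcov, hvsum, hA1⟩ := lp_duality Γ hΓ hcover
  obtain ⟨N₀, hch₀, hsupp₀, hub⟩ :=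
    exists_good_channel Γ hΓ (fracPack Γ) hA1 v hv0 hvcov hvsum
  have hcaplb : ∀ N, IsChannel N → SupportedOn Γ N →
      Real.log (fracPack Γ) ≤ capacity N := fun N h1 h2 =>
    log_le_capacity Γ hΓ (fracPack Γ) hA1 w hw0 hwf hwsum N h1 h2
  have hcapub : capacity N₀ ≤ Real.log (fracPack Γ) := by
    obtain ⟨p, hpdist, hceq, _⟩ := capacity_attained N₀ hch₀.1
    rw [hceq]
    exact hub p hpdist
  constructor
  · exact ⟨N₀, hch₀, hsupp₀, (le_antisymm hcapub (hcaplb N₀ hch₀ hsupp₀)).symm⟩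
  · rintro c ⟨N, h1, h2, rfl⟩
    exact hcaplb N h1 h2
end

section
/- Let X, Y be nonempty finite sets, Γ : X × Y → {0,1} with every x having at least one neighbor, and suppose w : X → ℝ and v : Y → ℝ satisfy: w ≥ 0, v ≥ 0, ∑_x w_x Γ(x,y) ≤ 1 for all y, M_x := ∑_y Γ(x,y) v_y ≥ 1 for all x, ∑_x w_x = ∑_y v_y = α > 0, and the complementary slackness conditions: (M_x > 1 → w_x = 0) for all x, and (v_y > 0 → ∑_x w_x Γ(x,y) = 1) for all y. Define the channel N(x,y) = Γ(x,y) v_y / M_x, the input distribution p_x = w_x / α, and q_y = ∑_x p_x N(x,y). Then: (a) q_y = v_y / α for all y; (b) for every x ∈ X, ∑_{y with N(x,y) > 0} N(x,y) log(N(x,y)/q_y) = log(α / M_x) ≤ log α, with equality whenever p_x > 0; and consequently (c) the mutual information satisfies I(p;N) = log α. -/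
open Classical in
/-- From an optimal primal/dual pair for the fractional packing LP, satisfying
complementary slackness, one constructs a channel and input distribution with
mutual information exactly log α. -/
theorem channel_from_LP_solutions
    {X Y : Type*} [Fintype X] [Fintype Y] [Nonempty X] [Nonempty Y]
    (Γ : X → Y → ℝ) (hΓ : ∀ x y, Γ x y = 0 ∨ Γ x y = 1)
    (hcover : ∀ x, ∃ y, Γ x y = 1)
    (w : X → ℝ) (v : Y → ℝ)
    (hw : ∀ x, 0 ≤ w x) (hv : ∀ y, 0 ≤ v y)
    (hpack : ∀ y, ∑ x, w x * Γ x y ≤ 1)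
    (hM : ∀ x, 1 ≤ ∑ y, Γ x y * v y)
    (α : ℝ) (hα : 0 < α)
    (hsumw : ∑ x, w x = α) (hsumv : ∑ y, v y = α)
    (hcs1 : ∀ x, 1 < ∑ y, Γ x y * v y → w x = 0)
    (hcs2 : ∀ y, 0 < v y → ∑ x, w x * Γ x y = 1) :
    let M : X → ℝ := fun x => ∑ y, Γ x y * v y
    let N : X → Y → ℝ := fun x y => Γ x y * v y / M x
    let p : X → ℝ := fun x => w x / α
    let q : Y → ℝ := fun y => ∑ x, p x * N x y
    (∀ y, q y = v y / α) ∧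
    (∀ x, (∑ y, if 0 < N x y then N x y * Real.log (N x y / q y) else 0)
        = Real.log (α / M x) ∧
      Real.log (α / M x) ≤ Real.log α ∧
      (0 < p x → Real.log (α / M x) = Real.log α)) ∧
    mutInfo p N = Real.log α := by
  intro M N p q
  have hMpos : ∀ x, 0 < M x := fun x => lt_of_lt_of_le one_pos (hM x)
  have hΓnn : ∀ x y, 0 ≤ Γ x y := fun x y => by rcases hΓ x y with h | h <;> simp [h]
  have hNnn : ∀ x y, 0 ≤ N x y := fun x y =>
    div_nonneg (mul_nonneg (hΓnn x y) (hv y)) (hMpos x).le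
  have hwM : ∀ x, w x / M x = w x := by
    intro x
    rcases eq_or_lt_of_le (hM x) with h | h
    · rw [show M x = 1 from h.symm, div_one]
    · rw [hcs1 x h, zero_div]
  have hqa : ∀ y, q y = v y / α := by
    intro y
    have h1 : q y = (∑ x, w x * Γ x y) * v y / α := by
      show (∑ x, p x * N x y) = _
      rw [Finset.sum_mul, Finset.sum_div]
      apply Finset.sum_congr rfl
      intro x _
      have h2 : p x * N x y = (w x / M x) * Γ x y * v y / α := by
        show w x / α * (Γ x y * v y / M x) = _
        field_simp
      rw [h2, hwM]
    rw [h1]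
    rcases eq_or_lt_of_le (hv y) with h | h
    · rw [← h]; ring
    · rw [hcs2 y h, one_mul]
  have hsumN : ∀ x, ∑ y, N x y = 1 := by
    intro x
    show (∑ y, Γ x y * v y / M x) = 1
    rw [← Finset.sum_div]
    exact div_self (hMpos x).ne'
  have hb1 : ∀ x, (∑ y, if 0 < N x y then N x y * Real.log (N x y / q y) else 0)
      = Real.log (α / M x) := by
    intro x
    have key : ∀ y, (if 0 < N x y then N x y * Real.log (N x y / q y) else 0)
        = N x y * Real.log (α / M x) := by
      intro y
      by_cases h : 0 < N x y
      · rw [if_pos h]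
        have hΓ1 : Γ x y = 1 := by
          rcases hΓ x y with h0 | h1
          · exfalso; simp only [N, h0, zero_mul, zero_div, lt_self_iff_false] at h
          · exact h1
        have hvy : 0 < v y := by
          rcases (hv y).eq_or_lt with h0 | h0
          · exfalso
            simp only [N, ← h0, mul_zero, zero_div, lt_self_iff_false] at h
          · exact h0
        have harg : N x y / q y = α / M x := by
          rw [hqa y]
          show Γ x y * v y / M x / (v y / α) = α / M x
          rw [hΓ1, one_mul]
          field_simp [hvy.ne', (hMpos x).ne', hα.ne']
        rw [harg]
      · rw [if_neg h, le_antisymm (not_lt.mp h) (hNnn x y), zero_mul]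
    rw [Finset.sum_congr rfl fun y _ => key y, ← Finset.sum_mul, hsumN, one_mul]
  have hble : ∀ x, Real.log (α / M x) ≤ Real.log α := by
    intro x
    apply Real.log_le_log (div_pos hα (hMpos x))
    exact div_le_self hα.le (hM x)
  have hbeq : ∀ x, 0 < p x → Real.log (α / M x) = Real.log α := by
    intro x hp
    have hwx : 0 < w x := by
      by_contra h
      have h' : w x = 0 := le_antisymm (not_lt.mp h) (hw x)
      have hp0 : p x = 0 := by show w x / α = 0; rw [h', zero_div]
      rw [hp0] at hp
      exact lt_irrefl 0 hp
    have hMx : M x = 1 := by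
      rcases eq_or_lt_of_le (hM x) with h | h
      · exact h.symm
      · exact absurd (hcs1 x h) hwx.ne'
    rw [hMx, div_one]
  have hpnn : ∀ x, 0 ≤ p x := fun x => div_nonneg (hw x) hα.le
  have hsump : ∑ x, p x = 1 := by
    show (∑ x, w x / α) = 1
    rw [← Finset.sum_div, hsumw]
    exact div_self hα.ne'
  refine ⟨hqa, fun x => ⟨hb1 x, hble x, hbeq x⟩, ?_⟩
  have hqy : ∀ y, (∑ x', p x' * N x' y) = q y := fun _ => rfl
  unfold mutInfo
  have key : ∀ x, (∑ y, if 0 < p x * N x y then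
      p x * N x y * Real.log (N x y / ∑ x', p x' * N x' y) else 0)
      = p x * Real.log (α / M x) := by
    intro x
    rcases (hpnn x).eq_or_lt with h0 | h0
    · simp [← h0]
    · have step : ∀ y, (if 0 < p x * N x y then
          p x * N x y * Real.log (N x y / ∑ x', p x' * N x' y) else 0)
          = p x * (if 0 < N x y then N x y * Real.log (N x y / q y) else 0) := by
        intro y
        by_cases h : 0 < N x y
        · rw [if_pos h, if_pos (mul_pos h0 h), hqy]
          ring
        · rw [if_neg h, if_neg, mul_zero]
          rw [le_antisymm (not_lt.mp h) (hNnn x y), mul_zero]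
          exact lt_irrefl 0
      rw [Finset.sum_congr rfl fun y _ => step y, ← Finset.mul_sum, hb1 x]
  rw [Finset.sum_congr rfl fun x _ => key x]
  have last : ∀ x, p x * Real.log (α / M x) = p x * Real.log α := by
    intro x
    rcases (hpnn x).eq_or_lt with h0 | h0
    · rw [← h0, zero_mul, zero_mul]
    · rw [hbeq x h0]
  rw [Finset.sum_congr rfl fun x _ => last x, ← Finset.sum_mul, hsump, one_mul]
end

section
/- Let X and E be n×n complex matrices with X positive semidefinite and 0 ≤ E ≤ I (Loewner order). Then tr(XE) is a nonnegative real number and tr(XE) ≤ ‖XE‖₁ ≤ √(tr X) · √(tr(XE)), where ‖M‖₁ = tr √(M† M) is the trace norm (sum of singular values). -/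
open scoped ComplexOrder

/-- The trace norm of a complex matrix: `tr √(M† M)`. -/
noncomputable def traceNorm {n : ℕ} (M : Matrix (Fin n) (Fin n) ℂ) : ℝ :=
  (((Matrix.isHermitian_conjTranspose_mul_self M).eigenvectorUnitary.1 *
    Matrix.diagonal (((↑) : ℝ → ℂ) ∘ (√·) ∘ (Matrix.isHermitian_conjTranspose_mul_self M).eigenvalues) *
    (star (Matrix.isHermitian_conjTranspose_mul_self M).eigenvectorUnitary :
      Matrix (Fin n) (Fin n) ℂ)).trace).re

/-- Square root of a PSD complex matrix (as in the older Mathlib). -/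
noncomputable def Matrix.PosSemidef.sqrt {n : ℕ} {A : Matrix (Fin n) (Fin n) ℂ}
    (hA : A.PosSemidef) : Matrix (Fin n) (Fin n) ℂ :=
  hA.1.eigenvectorUnitary.1 * Matrix.diagonal (((↑) : ℝ → ℂ) ∘ (√·) ∘ hA.1.eigenvalues) *
    (star hA.1.eigenvectorUnitary : Matrix (Fin n) (Fin n) ℂ)

lemma Matrix.PosSemidef.posSemidef_sqrt {n : ℕ} {A : Matrix (Fin n) (Fin n) ℂ}
    (hA : A.PosSemidef) : hA.sqrt.PosSemidef := by
  have hD : (Matrix.diagonal (((↑) : ℝ → ℂ) ∘ (√·) ∘ hA.1.eigenvalues)).PosSemidef :=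
    Matrix.PosSemidef.diagonal (fun i => by simp [Complex.zero_le_real, Real.sqrt_nonneg])
  have := hD.mul_mul_conjTranspose_same (hA.1.eigenvectorUnitary : Matrix (Fin n) (Fin n) ℂ)
  simpa [Matrix.PosSemidef.sqrt, Matrix.star_eq_conjTranspose] using this

lemma Matrix.PosSemidef.sqrt_mul_self {n : ℕ} {A : Matrix (Fin n) (Fin n) ℂ}
    (hA : A.PosSemidef) : hA.sqrt * hA.sqrt = A := by
  have hU : (star (hA.1.eigenvectorUnitary : Matrix (Fin n) (Fin n) ℂ)) *
      (hA.1.eigenvectorUnitary : Matrix (Fin n) (Fin n) ℂ) = 1 :=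
    Matrix.mem_unitaryGroup_iff'.mp hA.1.eigenvectorUnitary.2
  have hDD : Matrix.diagonal (((↑) : ℝ → ℂ) ∘ (√·) ∘ hA.1.eigenvalues) *
      Matrix.diagonal (((↑) : ℝ → ℂ) ∘ (√·) ∘ hA.1.eigenvalues)
      = Matrix.diagonal (RCLike.ofReal ∘ hA.1.eigenvalues) := by
    rw [Matrix.diagonal_mul_diagonal]
    congr 1; funext i
    simp only [Function.comp_apply]
    rw [← Complex.ofReal_mul, Real.mul_self_sqrt (hA.eigenvalues_nonneg i)]
    rfl
  conv_rhs => rw [hA.1.spectral_theorem, Unitary.conjStarAlgAut_apply]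
  rw [Matrix.PosSemidef.sqrt]
  rw [← hDD]
  simp only [mul_assoc]
  rw [← mul_assoc (star (hA.1.eigenvectorUnitary : Matrix (Fin n) (Fin n) ℂ)), hU, one_mul]

namespace TraceNormAux

open Matrix Complex

variable {n : ℕ}

lemma psd_trace_nonneg {P : Matrix (Fin n) (Fin n) ℂ} (hP : P.PosSemidef) : 0 ≤ P.trace := by
  exact hP.trace_nonneg


lemma cs (A B : Matrix (Fin n) (Fin n) ℂ) :
    ‖(Aᴴ * B).trace‖ ≤ Real.sqrt ((Aᴴ * A).trace.re) * Real.sqrt ((Bᴴ * B).trace.re) := by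
  classical
  let f : Matrix (Fin n) (Fin n) ℂ → EuclideanSpace ℂ (Fin n × Fin n) := fun M => WithLp.toLp 2 (fun p => M p.1 p.2)
  have htr : ∀ (A B : Matrix (Fin n) (Fin n) ℂ),
      (Aᴴ * B).trace = inner (𝕜 := ℂ) (f A) (f B) := by
    intro A B
    rw [PiLp.inner_apply]
    simp only [RCLike.inner_apply]
    simp only [Matrix.trace, Matrix.diag, Matrix.mul_apply, Matrix.conjTranspose_apply,
      Fintype.sum_prod_type, f]
    rw [Finset.sum_comm]
    exact Finset.sum_congr rfl fun i _ => Finset.sum_congr rfl fun j _ => mul_comm _ _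
  have hnorm : ∀ (A : Matrix (Fin n) (Fin n) ℂ), ‖f A‖ = Real.sqrt ((Aᴴ * A).trace.re) := by
    intro A
    rw [EuclideanSpace.norm_eq]
    congr 1
    have h2 := htr A A
    rw [PiLp.inner_apply] at h2
    simp only [RCLike.inner_apply] at h2
    rw [h2]
    rw [Complex.re_sum]
    congr 1; funext p
    rw [Complex.mul_conj']
    rw [← Complex.ofReal_pow, Complex.ofReal_re]
  calc ‖(Aᴴ * B).trace‖ = ‖inner (𝕜 := ℂ) (f A) (f B)‖ := by
        rw [← htr]
    _ ≤ ‖f A‖ * ‖f B‖ := norm_inner_le_norm _ _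
    _ = _ := by rw [hnorm, hnorm]

lemma polar_facts (M : Matrix (Fin n) (Fin n) ℂ) :
    ∃ W : Matrix (Fin n) (Fin n) ℂ,
      W * (Matrix.posSemidef_conjTranspose_mul_self M).sqrt = M ∧
      Wᴴ * M = (Matrix.posSemidef_conjTranspose_mul_self M).sqrt ∧
      (W * (Matrix.posSemidef_conjTranspose_mul_self M).sqrt * Wᴴ).trace
        = (Matrix.posSemidef_conjTranspose_mul_self M).sqrt.trace ∧
      (1 - W * Wᴴ).PosSemidef := by
  classical
  set hH := Matrix.posSemidef_conjTranspose_mul_self M with hHdef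
  set V : Matrix (Fin n) (Fin n) ℂ := hH.1.eigenvectorUnitary.1 with hVdef
  set d : Fin n → ℝ := hH.1.eigenvalues with hddef
  have hd : ∀ i, 0 ≤ d i := hH.eigenvalues_nonneg
  have hV1 : Vᴴ * V = 1 := by
    simpa [Matrix.star_eq_conjTranspose] using
      Matrix.mem_unitaryGroup_iff'.mp hH.1.eigenvectorUnitary.2
  have hV2 : V * Vᴴ = 1 := by
    simpa [Matrix.star_eq_conjTranspose] using
      Matrix.mem_unitaryGroup_iff.mp hH.1.eigenvectorUnitary.2
  set P : (Fin n → ℂ) → Matrix (Fin n) (Fin n) ℂ := fun c => V * Matrix.diagonal c * Vᴴ with hPdef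
  have hPmul : ∀ a b, P a * P b = P (a * b) := by
    intro a b
    show (V * diagonal a * Vᴴ) * (V * diagonal b * Vᴴ) = V * diagonal (a * b) * Vᴴ
    have h1 : Vᴴ * (V * diagonal b * Vᴴ) = diagonal b * Vᴴ := by
      rw [← mul_assoc, ← mul_assoc, hV1, one_mul]
    rw [mul_assoc (V * diagonal a), h1, ← mul_assoc, mul_assoc V, diagonal_mul_diagonal]
    rfl
  have hPtrace : ∀ c, (P c).trace = ∑ i, c i := by
    intro c
    show (V * diagonal c * Vᴴ).trace = _
    rw [Matrix.trace_mul_comm, ← mul_assoc, hV1, one_mul, Matrix.trace_diagonal]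
  have hPconj : ∀ c, (∀ i, star (c i) = c i) → (P c)ᴴ = P c := by
    intro c hc
    show (V * diagonal c * Vᴴ)ᴴ = V * diagonal c * Vᴴ
    rw [conjTranspose_mul, conjTranspose_mul, conjTranspose_conjTranspose,
      diagonal_conjTranspose]
    have : star c = c := funext hc
    rw [this, mul_assoc]
  -- spectral theorem
  set dd : Fin n → ℂ := fun i => (d i : ℂ) with hdddef
  have hspec : Mᴴ * M = P dd := by
    have := hH.1.spectral_theorem
    rw [hPdef]
    convert this using 2
    all_goals simp [Matrix.star_eq_conjTranspose]
    rfl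
  set sd : Fin n → ℂ := fun i => ((Real.sqrt (d i) : ℝ) : ℂ) with hsddef
  have hS : hH.sqrt = P sd := by
    rw [Matrix.PosSemidef.sqrt, hPdef]
    simp only [Matrix.star_eq_conjTranspose]
    rfl
  set g : Fin n → ℂ := fun i => if d i = 0 then 0 else ((Real.sqrt (d i) : ℝ) : ℂ)⁻¹ with hgdef
  set p : Fin n → ℂ := fun i => if d i = 0 then 0 else 1 with hpdef
  -- function identities
  have hsqrt_ne : ∀ i, d i ≠ 0 → (Real.sqrt (d i) : ℝ) ≠ 0 := fun i hi =>
    Real.sqrt_ne_zero'.mpr (lt_of_le_of_ne (hd i) (Ne.symm hi))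
  have hgdd : g * dd = sd := by
    funext i
    simp only [Pi.mul_apply, hgdef, hdddef, hsddef]
    by_cases hi : d i = 0
    · simp [hi]
    · rw [if_neg hi]
      have hne := hsqrt_ne i hi
      have : (d i : ℂ) = (Real.sqrt (d i) : ℂ) * (Real.sqrt (d i) : ℂ) := by
        rw [← Complex.ofReal_mul, Real.mul_self_sqrt (hd i)]
      rw [this, inv_mul_cancel_left₀ (by exact_mod_cast hne)]
  have hgsd : g * sd = p := by
    funext i
    simp only [Pi.mul_apply, hgdef, hsddef, hpdef]
    by_cases hi : d i = 0
    · simp [hi]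
    · rw [if_neg hi, if_neg hi, inv_mul_cancel₀ (by exact_mod_cast hsqrt_ne i hi)]
  have hpsd : p * sd = sd := by
    funext i
    simp only [Pi.mul_apply, hpdef, hsddef]
    by_cases hi : d i = 0
    · simp [hi]
    · rw [if_neg hi, one_mul]
  have hggddgg : g * g * dd * (g * g) = g * g := by
    funext i
    simp only [Pi.mul_apply, hgdef, hdddef]
    by_cases hi : d i = 0
    · simp [hi]
    · rw [if_neg hi]
      have hne : ((Real.sqrt (d i) : ℝ) : ℂ) ≠ 0 := by exact_mod_cast hsqrt_ne i hi
      have hdi : (d i : ℂ) = (Real.sqrt (d i) : ℂ) * (Real.sqrt (d i) : ℂ) := by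
        rw [← Complex.ofReal_mul, Real.mul_self_sqrt (hd i)]
      field_simp [hdi]
      rw [hdi]; ring
  have hpg : p * g = g := by
    funext i
    simp only [Pi.mul_apply, hpdef, hgdef]
    by_cases hi : d i = 0
    · simp [hi]
    · rw [if_neg hi, if_neg hi, one_mul]
  have hgstar : ∀ i, star (g i) = g i := by
    intro i
    simp only [hgdef]
    by_cases hi : d i = 0
    · simp [hi]
    · simp [if_neg hi, ← Complex.ofReal_inv]
  -- definition of W
  have hPg_conj : (P g)ᴴ = P g := hPconj g hgstar
  have hWconj : (M * P g)ᴴ = P g * Mᴴ := by rw [conjTranspose_mul, hPg_conj]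
  -- flat diagonalization
  have hdiagflat : Vᴴ * Mᴴ * M * V = diagonal dd := by
    have : Vᴴ * (Mᴴ * M) * V = diagonal dd := by
      rw [hspec, hPdef]
      show Vᴴ * (V * diagonal dd * Vᴴ) * V = diagonal dd
      simp only [← mul_assoc]
      rw [hV1, one_mul, mul_assoc, hV1, mul_one]
    simpa only [← mul_assoc] using this
  have hMVzero : ∀ i j, d j = 0 → (M * V) i j = 0 := by
    intro i j hj
    have hdg : (M * V)ᴴ * (M * V) = diagonal dd := by
      rw [conjTranspose_mul]
      simpa only [← mul_assoc] using hdiagflat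
    have h1 : ((M * V)ᴴ * (M * V)) j j = 0 := by
      rw [hdg, diagonal_apply_eq]
      simp [hdddef, hj]
    have h2 : ∑ k, Complex.normSq ((M * V) k j) = 0 := by
      have h3 := congrArg Complex.re h1
      rw [Matrix.mul_apply] at h3
      simp only [Matrix.conjTranspose_apply, Complex.conj_mul'] at h3
      rw [Complex.re_sum] at h3
      simpa [Complex.normSq_apply] using h3
    have h4 := (Finset.sum_eq_zero_iff_of_nonneg
      (fun k _ => Complex.normSq_nonneg ((M * V) k j))).mp h2 i (Finset.mem_univ i)
    exact Complex.normSq_eq_zero.mp h4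
  have hMVp : (M * V) * diagonal p = M * V := by
    ext i j
    rw [Matrix.mul_diagonal]
    by_cases hj : d j = 0
    · simp [hpdef, hj, hMVzero i j hj]
    · simp [hpdef, hj]
  have hMPp : M * P p = M := by
    show M * (V * diagonal p * Vᴴ) = M
    have : M * (V * diagonal p * Vᴴ) = ((M * V) * diagonal p) * Vᴴ := by
      simp only [mul_assoc]
    rw [this, hMVp, mul_assoc, hV2, mul_one]
  -- fact b
  have hb : (M * P g) * hH.sqrt = M := by
    rw [hS, mul_assoc, hPmul, hgsd, hMPp]
  -- fact a
  have ha : (M * P g)ᴴ * M = hH.sqrt := by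
    rw [hWconj, hS, mul_assoc, hspec, hPmul, hgdd]
  -- fact c
  have hc : ((M * P g) * hH.sqrt * (M * P g)ᴴ).trace = hH.sqrt.trace := by
    rw [Matrix.trace_mul_comm, hb, ha]
  -- fact d
  have hQ : (M * P g) * (M * P g)ᴴ = M * P (g * g) * Mᴴ := by
    rw [hWconj, ← hPmul]
    simp only [mul_assoc]
  have hgg_star : ∀ i, star ((g * g) i) = (g * g) i := by
    intro i
    simp only [Pi.mul_apply, star_mul', hgstar i]
  have hQherm : (M * P (g * g) * Mᴴ)ᴴ = M * P (g * g) * Mᴴ := by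
    simp only [conjTranspose_mul, conjTranspose_conjTranspose, hPconj (g * g) hgg_star,
      mul_assoc]
  have hQidem : (M * P (g * g) * Mᴴ) * (M * P (g * g) * Mᴴ) = M * P (g * g) * Mᴴ := by
    have e0 : (M * P (g * g) * Mᴴ) * (M * P (g * g) * Mᴴ)
        = M * (P (g * g) * ((Mᴴ * M) * (P (g * g) * Mᴴ))) := by
      simp only [mul_assoc]
    rw [e0, hspec, ← mul_assoc (P (g * g)) (P dd), hPmul, ← mul_assoc (P (g * g * dd)), hPmul,
      hggddgg]
    simp only [mul_assoc]
  have hd4 : (1 - (M * P g) * (M * P g)ᴴ).PosSemidef := by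
    rw [hQ]
    have h1 : (1 - M * P (g * g) * Mᴴ)ᴴ = 1 - M * P (g * g) * Mᴴ := by
      rw [conjTranspose_sub, conjTranspose_one, hQherm]
    have h2 : (1 - M * P (g * g) * Mᴴ)ᴴ * (1 - M * P (g * g) * Mᴴ)
        = 1 - M * P (g * g) * Mᴴ := by
      rw [h1, sub_mul, one_mul, mul_sub, mul_one, hQidem]
      abel
    have h3 := Matrix.posSemidef_conjTranspose_mul_self (1 - M * P (g * g) * Mᴴ)
    rwa [h2] at h3
  exact ⟨M * P g, hb, ha, hc, hd4⟩

end TraceNormAux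

open TraceNormAux Matrix Complex in
/-- For `X ⪰ 0` and `0 ≤ E ≤ I`, `tr(XE)` is a nonnegative real number and
`tr(XE) ≤ ‖XE‖₁ ≤ √(tr X) √(tr XE)`. -/
theorem trace_mul_le_traceNorm_le_sqrt
    {n : ℕ} (X E : Matrix (Fin n) (Fin n) ℂ)
    (hX : X.PosSemidef) (hE : E.PosSemidef) (hE1 : (1 - E).PosSemidef) :
    (X * E).trace.im = 0 ∧
    0 ≤ (X * E).trace.re ∧
    (X * E).trace.re ≤ traceNorm (X * E) ∧
    traceNorm (X * E) ≤ Real.sqrt X.trace.re * Real.sqrt (X * E).trace.re := by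
  classical
  set R := hX.sqrt with hRdef
  have hRR : R * R = X := hX.sqrt_mul_self
  have hRH : Rᴴ = R := hX.posSemidef_sqrt.1
  -- trace (X*E) is the trace of a PSD matrix
  have hXE : (X * E).trace = (R * E * R).trace := by
    rw [← hRR, mul_assoc, Matrix.trace_mul_comm R (R * E)]
  have hPSD1 : (R * E * R).PosSemidef := by
    have := hE.mul_mul_conjTranspose_same R
    rwa [hRH] at this
  have htr_nonneg : 0 ≤ (X * E).trace := hXE ▸ psd_trace_nonneg hPSD1
  have him : (X * E).trace.im = 0 := by
    rw [Complex.le_def] at htr_nonneg; exact htr_nonneg.2.symm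
  have hre : 0 ≤ (X * E).trace.re := by
    rw [Complex.le_def] at htr_nonneg; simpa using htr_nonneg.1
  -- setup for trace norm
  set hH := Matrix.posSemidef_conjTranspose_mul_self (X * E) with hHdef
  obtain ⟨W, hb, ha, hc, hq⟩ := polar_facts (X * E)
  have htn : traceNorm (X * E) = hH.sqrt.trace.re := rfl
  have hSps : hH.sqrt.PosSemidef := hH.posSemidef_sqrt
  have hStr : 0 ≤ hH.sqrt.trace := psd_trace_nonneg hSps
  have hSre : 0 ≤ hH.sqrt.trace.re := by
    rw [Complex.le_def] at hStr; simpa using hStr.1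
  set T := hSps.sqrt with hTdef
  have hTT : T * T = hH.sqrt := hSps.sqrt_mul_self
  have hTH : Tᴴ = T := hSps.posSemidef_sqrt.1
  -- middle inequality
  have key1 : (X * E).trace = ((T * Wᴴ)ᴴ * T).trace := by
    have h1 : (T * Wᴴ)ᴴ * T = W * (T * T) := by
      rw [conjTranspose_mul, conjTranspose_conjTranspose, hTH, mul_assoc]
    rw [h1, hTT, hb]
  have key1b : ((T * Wᴴ)ᴴ * (T * Wᴴ)).trace = hH.sqrt.trace := by
    have h1 : (T * Wᴴ)ᴴ * (T * Wᴴ) = W * hH.sqrt * Wᴴ := by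
      rw [conjTranspose_mul, conjTranspose_conjTranspose, hTH, ← hTT]
      simp only [mul_assoc]
    rw [h1, hc]
  have mid : (X * E).trace.re ≤ traceNorm (X * E) := by
    have h1 := cs (T * Wᴴ) T
    rw [key1b] at h1
    have h2 : (Tᴴ * T).trace = hH.sqrt.trace := by rw [hTH, hTT]
    rw [h2] at h1
    have h3 : (X * E).trace.re ≤ ‖((T * Wᴴ)ᴴ * T).trace‖ := by
      rw [← key1]; exact Complex.re_le_norm _
    rw [htn]
    calc (X * E).trace.re ≤ ‖((T * Wᴴ)ᴴ * T).trace‖ := h3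
      _ ≤ Real.sqrt (hH.sqrt.trace.re) * Real.sqrt (hH.sqrt.trace.re) := h1
      _ = hH.sqrt.trace.re := Real.mul_self_sqrt hSre
  -- right inequality
  have key2 : hH.sqrt.trace = ((R * W)ᴴ * (R * E)).trace := by
    have h1 : (R * W)ᴴ * (R * E) = Wᴴ * (R * R * E) := by
      rw [conjTranspose_mul, hRH]
      simp only [mul_assoc]
    rw [h1, hRR, ha]
  -- bound tr(Wᴴ X W) ≤ tr X
  have e1 : ((R * W)ᴴ * (R * W)).trace.re ≤ X.trace.re := by
    have t1 : ((R * W)ᴴ * (R * W)).trace = (X * (W * Wᴴ)).trace := by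
      have h1 : (R * W)ᴴ * (R * W) = Wᴴ * (R * (R * W)) := by
        rw [conjTranspose_mul, hRH]; simp only [mul_assoc]
      rw [h1, Matrix.trace_mul_comm]
      rw [show R * (R * W) * Wᴴ = X * (W * Wᴴ) by rw [← hRR]; simp only [mul_assoc]]
    have t3 : (R * ((1 - W * Wᴴ) * R)).PosSemidef := by
      have := hq.mul_mul_conjTranspose_same R
      rwa [hRH, mul_assoc] at this
    have t2 : (X * (W * Wᴴ)).trace + (R * ((1 - W * Wᴴ) * R)).trace = X.trace := by
      rw [Matrix.trace_mul_comm R ((1 - W * Wᴴ) * R), mul_assoc, hRR, sub_mul, one_mul,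
        Matrix.trace_sub, Matrix.trace_mul_comm X]
      ring
    have t4 : 0 ≤ (R * ((1 - W * Wᴴ) * R)).trace.re := by
      have := psd_trace_nonneg t3
      rw [Complex.le_def] at this; simpa using this.1
    have t5 := congrArg Complex.re t2
    rw [Complex.add_re] at t5
    rw [t1]
    linarith
  -- bound tr(E X E) ≤ tr (X E)
  have e2 : ((R * E)ᴴ * (R * E)).trace.re ≤ (X * E).trace.re := by
    set F := hE.sqrt with hFdef
    have hFF : F * F = E := hE.sqrt_mul_self
    have hFH : Fᴴ = F := hE.posSemidef_sqrt.1
    have hFEF : F * (E * F) = E * E := by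
      conv_lhs => rw [← hFF]
      conv_rhs => rw [← hFF]
      simp only [mul_assoc]
    have hEE : (E - E * E).PosSemidef := by
      have h0 := hE1.mul_mul_conjTranspose_same F
      have h1 : F * (1 - E) * Fᴴ = E - E * E := by
        rw [hFH, mul_sub, mul_one, sub_mul, hFF, mul_assoc, hFEF]
      rwa [h1] at h0
    have t1 : ((R * E)ᴴ * (R * E)).trace = (X * (E * E)).trace := by
      have h1 : (R * E)ᴴ * (R * E) = E * (R * (R * E)) := by
        rw [conjTranspose_mul, hRH, hE.1]; simp only [mul_assoc]
      rw [h1, Matrix.trace_mul_comm]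
      rw [show R * (R * E) * E = X * (E * E) by rw [← hRR]; simp only [mul_assoc]]
    have t3 : (R * ((E - E * E) * R)).PosSemidef := by
      have := hEE.mul_mul_conjTranspose_same R
      rwa [hRH, mul_assoc] at this
    have t2 : (X * (E * E)).trace + (R * ((E - E * E) * R)).trace = (X * E).trace := by
      rw [Matrix.trace_mul_comm R ((E - E * E) * R), mul_assoc, hRR, sub_mul,
        Matrix.trace_sub, Matrix.trace_mul_comm (E * E) X, Matrix.trace_mul_comm E X]
      ring
    have t4 : 0 ≤ (R * ((E - E * E) * R)).trace.re := by
      have := psd_trace_nonneg t3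
      rw [Complex.le_def] at this; simpa using this.1
    have t5 := congrArg Complex.re t2
    rw [Complex.add_re] at t5
    rw [t1]
    linarith
  -- nonneg of the two traces
  have e1n : 0 ≤ ((R * W)ᴴ * (R * W)).trace.re := by
    have := psd_trace_nonneg (Matrix.posSemidef_conjTranspose_mul_self (R * W))
    rw [Complex.le_def] at this; simpa using this.1
  have rgt : traceNorm (X * E) ≤ Real.sqrt X.trace.re * Real.sqrt (X * E).trace.re := by
    rw [htn]
    have h1 := cs (R * W) (R * E)
    calc hH.sqrt.trace.re ≤ ‖hH.sqrt.trace‖ := Complex.re_le_norm _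
      _ = ‖((R * W)ᴴ * (R * E)).trace‖ := by rw [key2]
      _ ≤ Real.sqrt (((R * W)ᴴ * (R * W)).trace.re)
          * Real.sqrt (((R * E)ᴴ * (R * E)).trace.re) := h1
      _ ≤ Real.sqrt X.trace.re * Real.sqrt (X * E).trace.re := by
          exact mul_le_mul (Real.sqrt_le_sqrt e1) (Real.sqrt_le_sqrt e2)
            (Real.sqrt_nonneg _) (Real.sqrt_nonneg _)
  exact ⟨him, hre, mid, rgt⟩
end

section
/- Let d ≥ 1, ω = exp(2πi/d), and let X and Z be the d×d shift and clock matrices: X e_j = e_{j+1 mod d} and Z e_j = ω^j e_j for the standard basis (e_j). For 0 ≤ u, v < d set W_{uv} = X^u Z^v. Then for every complex matrix M indexed by (Fin d × Fin m) (an operator on ℂ^d ⊗ ℂ^m), ∑_{u=0}^{d−1} ∑_{v=0}^{d−1} (W_{uv} ⊗ I_m) M (W_{uv} ⊗ I_m)† = d · (I_d ⊗ Tr_A M), where Tr_A M is the partial trace of M over the first factor. -/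
open scoped Kronecker Matrix
open Fin.NatCast Fin.CommRing

/-- Partial trace over the first tensor factor. -/
noncomputable def trA {d m : ℕ}
    (M : Matrix (Fin d × Fin m) (Fin d × Fin m) ℂ) : Matrix (Fin m) (Fin m) ℂ :=
  Matrix.of fun j j' => ∑ i, M (i, j) (i, j')

/-- The discrete shift matrix `X e_j = e_{j+1 mod d}`. -/
def weylX (d : ℕ) [NeZero d] : Matrix (Fin d) (Fin d) ℂ :=
  Matrix.of fun i j => if i = j + 1 then 1 else 0

/-- The discrete clock matrix `Z e_j = ω^j e_j`, `ω = exp(2πi/d)`. -/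
noncomputable def weylZ (d : ℕ) : Matrix (Fin d) (Fin d) ℂ :=
  Matrix.diagonal fun j : Fin d =>
    Complex.exp (2 * Real.pi * Complex.I / d) ^ (j : ℕ)

noncomputable def om (d : ℕ) : ℂ := Complex.exp (2 * Real.pi * Complex.I / d)

lemma om_conj (d : ℕ) : (starRingEnd ℂ) (om d) = (om d)⁻¹ := by
  rw [om, ← Complex.exp_conj, ← Complex.exp_neg]
  congr 1
  simp only [map_div₀, map_mul, Complex.conj_I, Complex.conj_ofReal, map_ofNat,
    Complex.conj_natCast]
  ring

lemma om_sum (d : ℕ) [NeZero d] (c c' : Fin d) :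
    ∑ v : Fin d, om d ^ ((c:ℕ) * v) * (starRingEnd ℂ) (om d ^ ((c':ℕ) * v))
      = if c = c' then (d:ℂ) else 0 := by
  have hprim : IsPrimitiveRoot (om d) d := Complex.isPrimitiveRoot_exp d (NeZero.ne d)
  have hne : om d ≠ 0 := Complex.exp_ne_zero _
  set ζ : ℂ := om d ^ (c:ℕ) * (om d ^ (c':ℕ))⁻¹ with hζ
  have hterm : ∀ v : Fin d,
      om d ^ ((c:ℕ) * v) * (starRingEnd ℂ) (om d ^ ((c':ℕ) * v)) = ζ ^ (v:ℕ) := by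
    intro v
    rw [map_pow, om_conj, hζ, mul_pow, ← pow_mul, ← inv_pow]
    ring
  simp only [hterm]
  rw [Fin.sum_univ_eq_sum_range (fun i => ζ ^ i) d]
  by_cases h : c = c'
  · subst h
    have : ζ = 1 := mul_inv_cancel₀ (pow_ne_zero _ hne)
    simp [this]
  · have hζne : ζ ≠ 1 := by
      intro h1
      apply h
      have : om d ^ (c:ℕ) = om d ^ (c':ℕ) := by
        rw [hζ, mul_inv_eq_one₀ (pow_ne_zero _ hne)] at h1
        exact h1
      exact Fin.ext (hprim.pow_inj c.isLt c'.isLt this)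
    have hζd : ζ ^ d = 1 := by
      rw [hζ, mul_pow, ← pow_mul, mul_comm (c:ℕ) d, pow_mul, hprim.pow_eq_one,
        inv_pow, ← pow_mul, mul_comm (c':ℕ) d, pow_mul, hprim.pow_eq_one]
      simp
    rw [geom_sum_eq hζne, hζd]
    simp [h]

lemma weylX_apply (d : ℕ) [NeZero d] (i j : Fin d) :
    weylX d i j = if i = j + 1 then 1 else 0 := rfl

lemma weylX_pow_apply (d : ℕ) [NeZero d] (u : ℕ) (i j : Fin d) :
    (weylX d ^ u) i j = if i = j + (u : Fin d) then 1 else 0 := by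
  induction u generalizing i j with
  | zero => simp [Matrix.one_apply]
  | succ n ih =>
    rw [pow_succ, Matrix.mul_apply]
    simp only [ih, weylX_apply, mul_ite, mul_one, mul_zero, ite_mul, one_mul,
      zero_mul]
    rw [Finset.sum_ite_eq' Finset.univ (j+1) (fun k => if i = k + (n:Fin d) then (1:ℂ) else 0)]
    simp only [Finset.mem_univ, if_true, Nat.cast_add, Nat.cast_one]
    congr 1
    rw [eq_iff_iff]; constructor <;> intro h <;> rw [h] <;> ring

lemma weylW_apply (d : ℕ) [NeZero d] (u v : ℕ) (i j : Fin d) :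
    (weylX d ^ u * weylZ d ^ v) i j
      = if j = i - (u : Fin d) then om d ^ ((j:ℕ) * v) else 0 := by
  have hz : weylZ d ^ v = Matrix.diagonal fun j : Fin d => om d ^ ((j:ℕ) * v) := by
    rw [weylZ, Matrix.diagonal_pow]
    ext j k
    simp [Matrix.diagonal, Pi.pow_apply, ← pow_mul, om]
  rw [hz, Matrix.mul_diagonal, weylX_pow_apply]
  by_cases h : j = i - (u : Fin d)
  · have h2 : i = j + (u : Fin d) := by rw [h]; ring
    rw [if_pos h2, if_pos h, one_mul]
  · have h2 : ¬ i = j + (u : Fin d) := by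
      intro hh; apply h; rw [hh]; ring
    rw [if_neg h2, if_neg h, zero_mul]

/-- The Weyl twirl: averaging over all Weyl conjugations on the first factor
yields `d` times the identity tensored with the partial trace. -/
theorem weyl_twirl
    (d m : ℕ) [NeZero d]
    (M : Matrix (Fin d × Fin m) (Fin d × Fin m) ℂ) :
    ∑ u : Fin d, ∑ v : Fin d,
      ((weylX d ^ (u : ℕ) * weylZ d ^ (v : ℕ)) ⊗ₖ
          (1 : Matrix (Fin m) (Fin m) ℂ)) * M *
        ((weylX d ^ (u : ℕ) * weylZ d ^ (v : ℕ)) ⊗ₖ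
          (1 : Matrix (Fin m) (Fin m) ℂ))ᴴ =
      (d : ℂ) • ((1 : Matrix (Fin d) (Fin d) ℂ) ⊗ₖ trA M) := by
  ext ⟨a, b⟩ ⟨a', b'⟩
  have key : ∀ u v : Fin d,
      ((((weylX d ^ (u : ℕ) * weylZ d ^ (v : ℕ)) ⊗ₖ (1 : Matrix (Fin m) (Fin m) ℂ)) * M *
        ((weylX d ^ (u : ℕ) * weylZ d ^ (v : ℕ)) ⊗ₖ (1 : Matrix (Fin m) (Fin m) ℂ))ᴴ)
          (a, b) (a', b'))
      = om d ^ (((a - u : Fin d) : ℕ) * (v : ℕ)) * M (a - u, b) (a' - u, b') *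
          (starRingEnd ℂ) (om d ^ (((a' - u : Fin d) : ℕ) * (v : ℕ))) := by
    intro u v
    rw [Matrix.mul_apply]
    have h1 : ∀ q, ((((weylX d ^ (u : ℕ) * weylZ d ^ (v : ℕ)) ⊗ₖ
        (1 : Matrix (Fin m) (Fin m) ℂ)) * M) (a, b) q)
        = om d ^ (((a - u : Fin d) : ℕ) * (v : ℕ)) * M (a - u, b) q := by
      intro q
      rw [Matrix.mul_apply, Fintype.sum_prod_type]
      simp only [Matrix.kroneckerMap_apply, Matrix.one_apply, weylW_apply,
        ite_mul, mul_ite, zero_mul, mul_zero, one_mul, mul_one,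
        Finset.sum_ite_eq, Finset.sum_ite_eq', Finset.mem_univ, if_true,
        Fin.cast_val_eq_self]
    have h2 : ∀ q, (((weylX d ^ (u : ℕ) * weylZ d ^ (v : ℕ)) ⊗ₖ
        (1 : Matrix (Fin m) (Fin m) ℂ))ᴴ q (a', b'))
        = if q = (a' - u, b') then (starRingEnd ℂ) (om d ^ (((a' - u : Fin d) : ℕ) * (v : ℕ)))
          else 0 := by
      rintro ⟨c', e'⟩
      rw [Matrix.conjTranspose_apply, Matrix.kroneckerMap_apply, Matrix.one_apply, weylW_apply]
      by_cases hc : c' = a' - u <;> by_cases he : b' = e' <;>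
        simp [hc, he, Prod.ext_iff, eq_comm, Complex.conj_conj, Fin.cast_val_eq_self]
    simp only [h1, h2, mul_ite, mul_zero, Finset.sum_ite_eq', Finset.mem_univ, if_true]
  simp only [Matrix.sum_apply, key]
  have inner : ∀ u : Fin d,
      ∑ v : Fin d, om d ^ (((a - u : Fin d) : ℕ) * (v : ℕ)) * M (a - u, b) (a' - u, b') *
          (starRingEnd ℂ) (om d ^ (((a' - u : Fin d) : ℕ) * (v : ℕ)))
      = (if a = a' then (d : ℂ) else 0) * M (a - u, b) (a' - u, b') := by
    intro u
    have : ∑ v : Fin d, om d ^ (((a - u : Fin d) : ℕ) * (v : ℕ)) * M (a - u, b) (a' - u, b') *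
          (starRingEnd ℂ) (om d ^ (((a' - u : Fin d) : ℕ) * (v : ℕ)))
        = (∑ v : Fin d, om d ^ (((a - u : Fin d) : ℕ) * (v : ℕ)) *
            (starRingEnd ℂ) (om d ^ (((a' - u : Fin d) : ℕ) * (v : ℕ)))) *
          M (a - u, b) (a' - u, b') := by
      rw [Finset.sum_mul]
      exact Finset.sum_congr rfl fun v _ => by ring
    rw [this, om_sum]
    congr 1
    simp [sub_left_inj]
  simp only [inner]
  by_cases h : a = a'
  · subst h
    simp only [if_pos rfl, Matrix.smul_apply, Matrix.kroneckerMap_apply, Matrix.one_apply_eq,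
      trA, Matrix.of_apply, smul_eq_mul, one_mul]
    rw [← Finset.mul_sum]
    congr 1
    exact Equiv.sum_comp (Equiv.subLeft a) (fun i => M (i, b) (i, b'))
  · simp [h, Matrix.one_apply, Matrix.smul_apply]
end
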